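/- arXiv:2511.02053 — 4 statements merged into one kernel-verified Lean document; each statement's English description precedes it below -/
import Mathlib

section
/- For any (p,q) ∈ {1,2}² and any measurable φ^{pq}: [0,R] → ℝ with φ^{pq} ∈ L²(ρ̃^{pq}), the single-kernel force field F_{φ^{pq}}: ℝ^{dN} → ℝ^{dN}, whose i-th block equals (1/N) Σ_{i'∈I_q, i'≠i} φ^{pq}(‖x_{i'}−x_i‖)(x_{i'}−x_i) for i ∈ I_p and is zero for i ∉ I_p, satisfies ‖F_{φ^{pq}}‖²_{L²(ρ_X)} ≤ ((N−1)/N) ‖φ^{pq}‖²_{L²(ρ̃^{pq})}. -/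
open MeasureTheory
open scoped BigOperators ENNReal RealInnerProductSpace

noncomputable section

/-- configuration space of `N` agents in `ℝ^d` -/
abbrev Conf (d N : ℕ) : Type := Fin N → EuclideanSpace ℝ (Fin d)

/-- species of agent `i`: `0` if `i < N₁` (type 1), `1` otherwise (type 2) -/
def typeOf (N1 : ℕ) {N : ℕ} (i : Fin N) : Fin 2 := if (i : ℕ) < N1 then 0 else 1

/-- single-kernel force field `F_{φ^{pq}}`: the `i`-th block is
`(1/N) ∑_{i' ∈ I_q, i' ≠ i} φ^{pq}(‖x_{i'} − x_i‖)(x_{i'} − x_i)` for `i ∈ I_p`,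
and `0` for `i ∉ I_p`. -/
def singleForce {d N : ℕ} (N1 : ℕ) (p q : Fin 2) (f : ℝ → ℝ) (X : Conf d N) :
    Conf d N :=
  fun i => if typeOf N1 i = p then
      (N : ℝ)⁻¹ • ∑ i' : Fin N,
        (if typeOf N1 i' = q ∧ i' ≠ i then f (‖X i' - X i‖) • (X i' - X i) else 0)
    else 0

/-- number of agents of species `p` -/
def numType (N1 N2 : ℕ) (p : Fin 2) : ℕ := if p = 0 then N1 else N2

/-- the pair-normalisation `Z_{pq}` -/
def pairCount (N1 N2 : ℕ) (p q : Fin 2) : ℕ :=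
  if p = q then numType N1 N2 p * (numType N1 N2 p - 1)
  else numType N1 N2 p * numType N1 N2 q

/-- pairwise-distance measure `ρ^{pq}`: the average over type-`(p,q)` pairs `(i,i')`
of the pushforward of `ρ_X` under `X ↦ ‖x_{i'} − x_i‖`, normalised by `Z_{pq}`. -/
def pairMeasure {d N : ℕ} (N1 N2 : ℕ) (ρX : Measure (Conf d N)) (p q : Fin 2) :
    Measure ℝ :=
  (pairCount N1 N2 p q : ℝ≥0∞)⁻¹ • ∑ i : Fin N, ∑ i' : Fin N,
    (if typeOf N1 i = p ∧ typeOf N1 i' = q ∧ i ≠ i'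
      then Measure.map (fun X : Conf d N => ‖X i' - X i‖) ρX else 0)

/-- weighted measure `ρ̃^{pq}`, `dρ̃^{pq}(r) = r² dρ^{pq}(r)` -/
def tildeMeasure {d N : ℕ} (N1 N2 : ℕ) (ρX : Measure (Conf d N)) (p q : Fin 2) :
    Measure ℝ :=
  (pairMeasure N1 N2 ρX p q).withDensity fun r => ENNReal.ofReal (r ^ 2)

lemma fin2_cases (q : Fin 2) : q = 0 ∨ q = 1 := by
  rcases q with ⟨v, hv⟩; interval_cases v <;> simp

lemma card_typeOf (N1 N2 : ℕ) (q : Fin 2) :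
    (Finset.univ.filter fun i : Fin (N1 + N2) => typeOf N1 i = q).card = numType N1 N2 q := by
  have hlt : (Finset.univ.filter fun i : Fin (N1 + N2) => (i : ℕ) < N1).card = N1 := by
    rw [Finset.card_filter]
    rw [Fin.sum_univ_eq_sum_range (fun k => if k < N1 then (1:ℕ) else 0)]
    rw [← Finset.card_filter]
    have h : (Finset.range (N1 + N2)).filter (fun k => k < N1) = Finset.range N1 := by
      ext k; simp [Finset.mem_range]; omega
    rw [h, Finset.card_range]
  have htot := Finset.card_filter_add_card_filter_not
      (s := (Finset.univ : Finset (Fin (N1 + N2)))) (p := fun i => (i : ℕ) < N1)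
  simp only [Finset.card_univ, Fintype.card_fin, hlt] at htot
  rcases fin2_cases q with rfl|rfl
  · have h : (Finset.univ.filter fun i : Fin (N1 + N2) => typeOf N1 i = 0)
        = Finset.univ.filter fun i : Fin (N1 + N2) => (i : ℕ) < N1 := by
      ext i; rw [Finset.mem_filter, Finset.mem_filter]; unfold typeOf; split <;> simp_all
    rw [h, hlt]; simp [numType]
  · have h : (Finset.univ.filter fun i : Fin (N1 + N2) => typeOf N1 i = 1)
        = Finset.univ.filter fun i : Fin (N1 + N2) => ¬ (i : ℕ) < N1 := by
      ext i; rw [Finset.mem_filter, Finset.mem_filter]; unfold typeOf; split <;> simp_all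
    rw [h]
    have : (Finset.univ.filter fun i : Fin (N1+N2) => ¬ (i:ℕ) < N1).card = N2 := by omega
    rw [this]; simp [numType]

lemma count_le (N1 N2 : ℕ) (h1 : 0 < N1) (h2 : 0 < N2) (p q : Fin 2) :
    (if p = q then numType N1 N2 q - 1 else numType N1 N2 q) * pairCount N1 N2 p q
      ≤ (N1 + N2 - 1) * (N1 + N2)^2 := by
  obtain ⟨a, rfl⟩ : ∃ a, N1 = a + 1 := ⟨N1-1, by omega⟩
  obtain ⟨b, rfl⟩ : ∃ b, N2 = b + 1 := ⟨N2-1, by omega⟩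
  have h : a + 1 + (b + 1) - 1 = a + b + 1 := by omega
  rcases fin2_cases p with rfl|rfl <;> rcases fin2_cases q with rfl|rfl <;>
    simp [pairCount, numType, h] <;> rw [pow_two] <;>
      exact Nat.mul_le_mul (by omega) (Nat.mul_le_mul (by omega) (by omega))

lemma count_zero (N1 N2 : ℕ) (h1 : 0 < N1) (h2 : 0 < N2) (p q : Fin 2)
    (hZ : pairCount N1 N2 p q = 0) :
    (if p = q then numType N1 N2 q - 1 else numType N1 N2 q) = 0 := by
  rcases fin2_cases p with rfl|rfl <;> rcases fin2_cases q with rfl|rfl <;>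
    simp [pairCount, numType] at * <;> omega

lemma const_le (Nn M Z : ℕ) (hN : Nn ≠ 0) (hMZ : M * Z ≤ (Nn - 1) * Nn ^ 2) (hZM : Z = 0 → M = 0) :
    (M : ℝ≥0∞) * ((Nn : ℝ≥0∞) ^ 2)⁻¹ ≤ ((Nn - 1 : ℕ) : ℝ≥0∞) * ((Z : ℝ≥0∞))⁻¹ := by
  by_cases hZ : Z = 0
  · simp [hZM hZ]
  have hz0 : (Z : ℝ≥0∞) ≠ 0 := by exact_mod_cast hZ
  have hzt : (Z : ℝ≥0∞) ≠ ∞ := ENNReal.natCast_ne_top Z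
  have hn0 : ((Nn : ℝ≥0∞) ^ 2) ≠ 0 := by
    simp only [ne_eq, pow_eq_zero_iff, OfNat.ofNat_ne_zero, not_false_eq_true, and_true]
    exact_mod_cast hN
  have hnt : ((Nn : ℝ≥0∞) ^ 2) ≠ ∞ := by
    exact ENNReal.pow_ne_top (ENNReal.natCast_ne_top Nn)
  calc (M : ℝ≥0∞) * ((Nn : ℝ≥0∞) ^ 2)⁻¹
      = ((M * Z : ℕ) : ℝ≥0∞) * (Z : ℝ≥0∞)⁻¹ * ((Nn : ℝ≥0∞) ^ 2)⁻¹ := by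
        push_cast
        rw [mul_assoc (M : ℝ≥0∞), ENNReal.mul_inv_cancel hz0 hzt, mul_one]
    _ ≤ (((Nn - 1) * Nn ^ 2 : ℕ) : ℝ≥0∞) * (Z : ℝ≥0∞)⁻¹ * ((Nn : ℝ≥0∞) ^ 2)⁻¹ := by
        gcongr
    _ = ((Nn - 1 : ℕ) : ℝ≥0∞) * (Z : ℝ≥0∞)⁻¹ * ((Nn : ℝ≥0∞) ^ 2 * ((Nn : ℝ≥0∞) ^ 2)⁻¹) := by
        push_cast [Nat.cast_mul]
        ring
    _ = ((Nn - 1 : ℕ) : ℝ≥0∞) * (Z : ℝ≥0∞)⁻¹ := by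
        rw [ENNReal.mul_inv_cancel hn0 hnt, mul_one]

/-- For any `(p,q) ∈ {1,2}²` and any measurable `φ^{pq} : [0,R] → ℝ` with
`φ^{pq} ∈ L²(ρ̃^{pq})`, the single-kernel force field satisfies
`‖F_{φ^{pq}}‖²_{L²(ρ_X)} ≤ ((N−1)/N) ‖φ^{pq}‖²_{L²(ρ̃^{pq})}`, where
`‖g‖²_{L²(ρ_X)} = (1/N) ∑ᵢ ∫ ‖gᵢ(X)‖² dρ_X(X)`. -/
theorem singleForce_L2_bound
    (d N1 N2 : ℕ) (hd : 0 < d) (hN1 : 0 < N1) (hN2 : 0 < N2)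
    (R : ℝ) (hR : 0 < R)
    (ρX : Measure (Conf d (N1 + N2))) [IsProbabilityMeasure ρX]
    -- `ρ_X` is supported where all pairwise distances lie in `[0,R]`
    (hsupp : ∀ᵐ X ∂ρX, ∀ i i' : Fin (N1 + N2), ‖X i' - X i‖ ≤ R)
    (p q : Fin 2) (φ : ℝ → ℝ) (hφ_meas : Measurable φ)
    (hφ_L2 : MemLp φ 2 (tildeMeasure N1 N2 ρX p q)) :
    ((N1 + N2 : ℝ))⁻¹ *
        ∑ i : Fin (N1 + N2), ∫ X, ‖singleForce N1 p q φ X i‖ ^ 2 ∂ρX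
      ≤ (((N1 + N2 : ℝ) - 1) / (N1 + N2 : ℝ)) *
          ∫ r, (φ r) ^ 2 ∂(tildeMeasure N1 N2 ρX p q) := by
  classical
  have hNpos : 0 < N1 + N2 := by omega
  -- basic measurability
  have hsub : ∀ i i' : Fin (N1+N2), Measurable fun X : Conf d (N1+N2) => X i' - X i :=
    fun i i' => (measurable_pi_apply i').sub (measurable_pi_apply i)
  have hr : ∀ i i' : Fin (N1+N2), Measurable fun X : Conf d (N1+N2) => ‖X i' - X i‖ :=
    fun i i' => (hsub i i').norm
  have hg : ∀ i i' : Fin (N1+N2), Measurable fun X : Conf d (N1+N2) =>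
      ENNReal.ofReal (φ ‖X i' - X i‖ ^ 2 * ‖X i' - X i‖ ^ 2) :=
    fun i i' => (((hφ_meas.comp (hr i i')).pow_const 2).mul ((hr i i').pow_const 2)).ennreal_ofReal
  have hF : ∀ i : Fin (N1+N2), Measurable fun X : Conf d (N1+N2) => singleForce N1 p q φ X i := by
    intro i
    unfold singleForce
    by_cases hip : typeOf N1 i = p
    · simp only [if_pos hip]
      refine Measurable.smul (measurable_const (a := ((N1 + N2 : ℕ) : ℝ)⁻¹)) ?_
      refine Finset.measurable_sum _ fun i' _ => ?_
      by_cases h : typeOf N1 i' = q ∧ i' ≠ i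
      · simp only [if_pos h]
        exact (hφ_meas.comp (hr i i')).smul (hsub i i')
      · simp only [if_neg h]; exact measurable_const
    · simp only [if_neg hip]; exact measurable_const
  -- abbreviations
  set M : ℕ := if p = q then numType N1 N2 q - 1 else numType N1 N2 q with hM
  set Z : ℕ := pairCount N1 N2 p q with hZdef
  set P : Fin (N1+N2) → Fin (N1+N2) → ℝ≥0∞ := fun i i' =>
    ∫⁻ X, ENNReal.ofReal (φ ‖X i' - X i‖ ^ 2 * ‖X i' - X i‖ ^ 2) ∂ρX with hP
  set S : ℝ≥0∞ := ∑ i : Fin (N1+N2), ∑ i' : Fin (N1+N2),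
    (if typeOf N1 i = p ∧ typeOf N1 i' = q ∧ i' ≠ i then P i i' else 0) with hS
  set L : Fin (N1+N2) → ℝ≥0∞ := fun i =>
    ∫⁻ X, ENNReal.ofReal (‖singleForce N1 p q φ X i‖ ^ 2) ∂ρX with hL
  set T : ℝ≥0∞ := ∫⁻ r, ENNReal.ofReal (φ r ^ 2) ∂(tildeMeasure N1 N2 ρX p q) with hT
  -- the weighted L² norm of φ in terms of the pair pushforwards
  have hTS : T = (Z : ℝ≥0∞)⁻¹ * S := by
    have hdens : Measurable fun r : ℝ => ENNReal.ofReal (r ^ 2) :=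
      (measurable_id.pow_const 2).ennreal_ofReal
    have hfm : Measurable fun r : ℝ => ENNReal.ofReal (φ r ^ 2) :=
      (hφ_meas.pow_const 2).ennreal_ofReal
    rw [hT, tildeMeasure, lintegral_withDensity_eq_lintegral_mul _ hdens hfm, pairMeasure,
      lintegral_smul_measure, lintegral_finset_sum_measure, ← hZdef]
    congr 1
    rw [hS]
    refine Finset.sum_congr rfl fun i _ => ?_
    rw [lintegral_finset_sum_measure]
    refine Finset.sum_congr rfl fun i' _ => ?_
    by_cases h : typeOf N1 i = p ∧ typeOf N1 i' = q ∧ i ≠ i'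
    · rw [if_pos h, if_pos ⟨h.1, h.2.1, h.2.2.symm⟩]
      simp only [Pi.mul_apply]
      rw [lintegral_map (f := fun r => ENNReal.ofReal (r ^ 2) * ENNReal.ofReal (φ r ^ 2)) (hdens.mul hfm) (hr i i')]
      refine lintegral_congr fun X => ?_
      rw [← ENNReal.ofReal_mul (sq_nonneg _)]
      congr 1
      ring
    · rw [if_neg h, if_neg (fun hc => h ⟨hc.1, hc.2.1, hc.2.2.symm⟩)]
      simp
  -- pointwise Cauchy–Schwarz bound
  have hpoint : ∀ (X : Conf d (N1+N2)) (i : Fin (N1+N2)),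
      ‖singleForce N1 p q φ X i‖ ^ 2
        ≤ ((N1+N2 : ℝ)⁻¹)^2 * M * ∑ i' : Fin (N1+N2),
            (if typeOf N1 i = p ∧ typeOf N1 i' = q ∧ i' ≠ i
              then φ ‖X i' - X i‖ ^ 2 * ‖X i' - X i‖ ^ 2 else 0) := by
    intro X i
    by_cases hip : typeOf N1 i = p
    · simp only [singleForce, if_pos hip]
      have hnn : (0:ℝ) ≤ ((N1+N2 : ℕ):ℝ)⁻¹ := by positivity
      rw [norm_smul, Real.norm_eq_abs, abs_of_nonneg hnn, mul_pow]
      have hcast : ((N1+N2 : ℕ):ℝ)⁻¹ ^ 2 = ((N1+N2 : ℝ)⁻¹)^2 := by push_cast; ring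
      rw [hcast, mul_assoc]
      refine mul_le_mul_of_nonneg_left ?_ (by positivity)
      -- core Cauchy–Schwarz step
      set s := Finset.univ.filter fun i' : Fin (N1+N2) => typeOf N1 i' = q ∧ i' ≠ i with hs
      have h1 : (∑ i' : Fin (N1+N2),
            if typeOf N1 i' = q ∧ i' ≠ i then φ ‖X i' - X i‖ • (X i' - X i) else 0)
          = ∑ i' ∈ s, φ ‖X i' - X i‖ • (X i' - X i) := (Finset.sum_filter _ _).symm
      rw [h1]
      have hcard : (s.card : ℝ) ≤ (M : ℝ) := by
        have : s.card ≤ M := by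
          by_cases hpq : p = q
          · have him : i ∈ Finset.univ.filter fun j : Fin (N1+N2) => typeOf N1 j = q := by
              simp only [Finset.mem_filter, Finset.mem_univ, true_and]
              rw [← hpq]; exact hip
            have hsub2 : s ⊆ (Finset.univ.filter fun j : Fin (N1+N2) => typeOf N1 j = q).erase i := by
              intro x hx
              simp only [hs, Finset.mem_filter, Finset.mem_univ, true_and,
                Finset.mem_erase] at hx ⊢
              exact ⟨hx.2, hx.1⟩
            calc s.card ≤ _ := Finset.card_le_card hsub2
              _ = numType N1 N2 q - 1 := by
                  rw [Finset.card_erase_of_mem him, card_typeOf]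
              _ = M := by rw [hM, if_pos hpq]
          · have hsub2 : s ⊆ Finset.univ.filter fun j : Fin (N1+N2) => typeOf N1 j = q := by
              intro x hx
              simp only [hs, Finset.mem_filter, Finset.mem_univ, true_and] at hx ⊢
              exact hx.1
            calc s.card ≤ _ := Finset.card_le_card hsub2
              _ = numType N1 N2 q := card_typeOf N1 N2 q
              _ = M := by rw [hM, if_neg hpq]
        exact_mod_cast this
      calc ‖∑ i' ∈ s, φ ‖X i' - X i‖ • (X i' - X i)‖ ^ 2
          ≤ (∑ i' ∈ s, ‖φ ‖X i' - X i‖ • (X i' - X i)‖) ^ 2 := by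
            exact pow_le_pow_left₀ (norm_nonneg _) (norm_sum_le _ _) 2
        _ ≤ s.card * ∑ i' ∈ s, ‖φ ‖X i' - X i‖ • (X i' - X i)‖ ^ 2 :=
            sq_sum_le_card_mul_sum_sq
        _ ≤ (M : ℝ) * ∑ i' ∈ s, ‖φ ‖X i' - X i‖ • (X i' - X i)‖ ^ 2 := by
            refine mul_le_mul_of_nonneg_right hcard ?_
            exact Finset.sum_nonneg fun i' _ => sq_nonneg _
        _ = (M : ℝ) * ∑ i' : Fin (N1+N2),
              (if typeOf N1 i = p ∧ typeOf N1 i' = q ∧ i' ≠ i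
                then φ ‖X i' - X i‖ ^ 2 * ‖X i' - X i‖ ^ 2 else 0) := by
            congr 1
            rw [hs, Finset.sum_filter]
            refine Finset.sum_congr rfl fun i' _ => ?_
            by_cases h : typeOf N1 i' = q ∧ i' ≠ i
            · rw [if_pos h, if_pos ⟨hip, h⟩, norm_smul, mul_pow, Real.norm_eq_abs, sq_abs]
            · rw [if_neg h, if_neg (fun hc => h ⟨hc.2.1, hc.2.2⟩)]
    · simp only [singleForce, if_neg hip, norm_zero]
      rw [zero_pow (by norm_num)]
      refine mul_nonneg (by positivity) ?_
      refine Finset.sum_nonneg fun i' _ => ?_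
      split
      · positivity
      · exact le_rfl
  -- integrated bound
  have hLle : ∀ i : Fin (N1+N2), L i ≤ ENNReal.ofReal (((N1+N2 : ℝ)⁻¹)^2 * M)
      * ∑ i' : Fin (N1+N2),
          (if typeOf N1 i = p ∧ typeOf N1 i' = q ∧ i' ≠ i then P i i' else 0) := by
    intro i
    have hite : ∀ i' : Fin (N1+N2), Measurable fun X : Conf d (N1+N2) =>
        (if typeOf N1 i = p ∧ typeOf N1 i' = q ∧ i' ≠ i
          then φ ‖X i' - X i‖ ^ 2 * ‖X i' - X i‖ ^ 2 else 0) := by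
      intro i'
      by_cases h : typeOf N1 i = p ∧ typeOf N1 i' = q ∧ i' ≠ i
      · simp only [if_pos h]
        exact ((hφ_meas.comp (hr i i')).pow_const 2).mul ((hr i i').pow_const 2)
      · simp only [if_neg h]; exact measurable_const
    have hkey : ∫⁻ X, ENNReal.ofReal (∑ i' : Fin (N1+N2),
          (if typeOf N1 i = p ∧ typeOf N1 i' = q ∧ i' ≠ i
            then φ ‖X i' - X i‖ ^ 2 * ‖X i' - X i‖ ^ 2 else 0)) ∂ρX
        = ∑ i' : Fin (N1+N2),
            (if typeOf N1 i = p ∧ typeOf N1 i' = q ∧ i' ≠ i then P i i' else 0) := by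
      have h1 : ∀ X : Conf d (N1+N2), ENNReal.ofReal (∑ i' : Fin (N1+N2),
          (if typeOf N1 i = p ∧ typeOf N1 i' = q ∧ i' ≠ i
            then φ ‖X i' - X i‖ ^ 2 * ‖X i' - X i‖ ^ 2 else 0))
          = ∑ i' : Fin (N1+N2), ENNReal.ofReal
            (if typeOf N1 i = p ∧ typeOf N1 i' = q ∧ i' ≠ i
              then φ ‖X i' - X i‖ ^ 2 * ‖X i' - X i‖ ^ 2 else 0) := by
        intro X
        refine ENNReal.ofReal_sum_of_nonneg fun i' _ => ?_
        split
        · positivity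
        · exact le_rfl
      simp only [h1]
      rw [lintegral_finset_sum _ fun i' _ => (hite i').ennreal_ofReal]
      refine Finset.sum_congr rfl fun i' _ => ?_
      by_cases h : typeOf N1 i = p ∧ typeOf N1 i' = q ∧ i' ≠ i
      · simp only [if_pos h]; rfl
      · simp only [if_neg h, ENNReal.ofReal_zero, lintegral_const, zero_mul]
    calc L i ≤ ∫⁻ X, ENNReal.ofReal (((N1+N2 : ℝ)⁻¹)^2 * M * ∑ i' : Fin (N1+N2),
          (if typeOf N1 i = p ∧ typeOf N1 i' = q ∧ i' ≠ i
            then φ ‖X i' - X i‖ ^ 2 * ‖X i' - X i‖ ^ 2 else 0)) ∂ρX := by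
          rw [hL]
          exact lintegral_mono fun X => ENNReal.ofReal_le_ofReal (hpoint X i)
      _ = ∫⁻ X, ENNReal.ofReal (((N1+N2 : ℝ)⁻¹)^2 * M)
            * ENNReal.ofReal (∑ i' : Fin (N1+N2),
              (if typeOf N1 i = p ∧ typeOf N1 i' = q ∧ i' ≠ i
                then φ ‖X i' - X i‖ ^ 2 * ‖X i' - X i‖ ^ 2 else 0)) ∂ρX := by
          refine lintegral_congr fun X => ?_
          rw [ENNReal.ofReal_mul (by positivity)]
      _ = ENNReal.ofReal (((N1+N2 : ℝ)⁻¹)^2 * M) * ∫⁻ X, ENNReal.ofReal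
            (∑ i' : Fin (N1+N2),
              (if typeOf N1 i = p ∧ typeOf N1 i' = q ∧ i' ≠ i
                then φ ‖X i' - X i‖ ^ 2 * ‖X i' - X i‖ ^ 2 else 0)) ∂ρX := by
          rw [lintegral_const_mul _ ((Finset.measurable_sum _ fun i' _ => hite i').ennreal_ofReal)]
      _ = ENNReal.ofReal (((N1+N2 : ℝ)⁻¹)^2 * M) * ∑ i' : Fin (N1+N2),
            (if typeOf N1 i = p ∧ typeOf N1 i' = q ∧ i' ≠ i then P i i' else 0) := by
          rw [hkey]
  -- total bound
  have hofReal : ENNReal.ofReal (((N1+N2 : ℝ)⁻¹)^2 * M)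
      = (M : ℝ≥0∞) * (((N1+N2 : ℕ) : ℝ≥0∞)^2)⁻¹ := by
    have hc : ((N1+N2 : ℝ)) = ((N1+N2 : ℕ) : ℝ) := by push_cast; ring
    rw [hc, ENNReal.ofReal_mul (by positivity), ENNReal.ofReal_pow (by positivity),
      ENNReal.ofReal_inv_of_pos (by exact_mod_cast hNpos), ENNReal.ofReal_natCast,
      ENNReal.inv_pow, mul_comm]
    rw [ENNReal.ofReal_natCast]
  have hsum : (∑ i : Fin (N1+N2), L i) ≤ ((N1 + N2 - 1 : ℕ) : ℝ≥0∞) * T := by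
    calc (∑ i : Fin (N1+N2), L i)
        ≤ ∑ i : Fin (N1+N2), (ENNReal.ofReal (((N1+N2 : ℝ)⁻¹)^2 * M)
            * ∑ i' : Fin (N1+N2),
              (if typeOf N1 i = p ∧ typeOf N1 i' = q ∧ i' ≠ i then P i i' else 0)) :=
          Finset.sum_le_sum fun i _ => hLle i
      _ = ENNReal.ofReal (((N1+N2 : ℝ)⁻¹)^2 * M) * S := by rw [← Finset.mul_sum, hS]
      _ = (M : ℝ≥0∞) * (((N1+N2 : ℕ) : ℝ≥0∞)^2)⁻¹ * S := by rw [hofReal]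
      _ ≤ ((N1 + N2 - 1 : ℕ) : ℝ≥0∞) * ((Z : ℝ≥0∞))⁻¹ * S := by
          refine mul_le_mul_left ?_ S
          refine const_le (N1+N2) M Z (by omega) ?_ ?_
          · rw [hM, hZdef]; exact count_le N1 N2 hN1 hN2 p q
          · rw [hM, hZdef]; exact count_zero N1 N2 hN1 hN2 p q
      _ = ((N1 + N2 - 1 : ℕ) : ℝ≥0∞) * T := by rw [hTS]; ring
  -- finiteness
  have hTfin : T ≠ ∞ := by
    have hint2 := hφ_L2.integrable_sq
    have hTeq : T = ∫⁻ r, (‖φ r ^ 2‖₊ : ℝ≥0∞) ∂(tildeMeasure N1 N2 ρX p q) := by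
      rw [hT]
      exact lintegral_congr fun r => (Real.enorm_eq_ofReal (sq_nonneg _)).symm
    rw [hTeq]
    exact hint2.2.ne
  have hRfin : ((N1 + N2 - 1 : ℕ) : ℝ≥0∞) * T ≠ ∞ :=
    ENNReal.mul_ne_top (ENNReal.natCast_ne_top _) hTfin
  have hLfin : ∀ i ∈ (Finset.univ : Finset (Fin (N1+N2))), L i ≠ ∞ := by
    intro i _
    exact ne_top_of_le_ne_top hRfin
      (le_trans (Finset.single_le_sum (fun j _ => zero_le) (Finset.mem_univ i)) hsum)
  -- rewrite both sides
  have hInt : ∀ i : Fin (N1+N2), ∫ X, ‖singleForce N1 p q φ X i‖ ^ 2 ∂ρX = (L i).toReal :=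
    fun i => integral_eq_lintegral_of_nonneg_ae (Filter.Eventually.of_forall fun X => sq_nonneg _)
      ((hF i).norm.pow_const 2).aestronglyMeasurable
  have hIntT : ∫ r, (φ r) ^ 2 ∂(tildeMeasure N1 N2 ρX p q) = T.toReal :=
    integral_eq_lintegral_of_nonneg_ae (Filter.Eventually.of_forall fun r => sq_nonneg _)
      (hφ_meas.pow_const 2).aestronglyMeasurable
  rw [hIntT]
  have hsum' : ∑ i : Fin (N1+N2), ∫ X, ‖singleForce N1 p q φ X i‖ ^ 2 ∂ρX
      = (∑ i : Fin (N1+N2), L i).toReal := by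
    rw [ENNReal.toReal_sum hLfin]
    exact Finset.sum_congr rfl fun i _ => hInt i
  rw [hsum']
  have h1 : (∑ i : Fin (N1+N2), L i).toReal ≤ ((N1 + N2 - 1 : ℕ) : ℝ) * T.toReal := by
    have h2 := ENNReal.toReal_mono hRfin hsum
    rwa [ENNReal.toReal_mul, ENNReal.toReal_natCast] at h2
  calc (N1+N2 : ℝ)⁻¹ * (∑ i : Fin (N1+N2), L i).toReal
      ≤ (N1+N2 : ℝ)⁻¹ * (((N1 + N2 - 1 : ℕ) : ℝ) * T.toReal) :=
        mul_le_mul_of_nonneg_left h1 (by positivity)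
    _ = ((N1 + N2 : ℝ) - 1) / (N1 + N2 : ℝ) * T.toReal := by
        rw [Nat.cast_sub (by omega)]
        push_cast
        ring


end
end

section
/- The operator A: ∏_{p,q} H_{K^{pq}} → L²(ρ_X) defined by Aφ = F_φ is a bounded linear operator, and for every φ = (φ^{11},φ^{12},φ^{21},φ^{22}) it satisfies ‖Aφ‖²_{L²(ρ_X)} ≤ Σ_{p,q} 2 κ_{pq}² R² ‖φ^{pq}‖²_{H_{K^{pq}}}. -/
open MeasureTheory
open scoped BigOperators ENNReal RealInnerProductSpace

noncomputable section

/-- the configuration space viewed as the Hilbert space `ℝ^{dN}` -/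
abbrev EConf (d N : ℕ) : Type := PiLp 2 (fun _ : Fin N => EuclideanSpace ℝ (Fin d))

/-- two-species force field `F_φ` for a kernel family `φ = (φ^{pq})` -/
def forceField {d N : ℕ} (N1 : ℕ) (ψ : Fin 2 → Fin 2 → ℝ → ℝ) (X : Conf d N) :
    Conf d N :=
  fun i => (N : ℝ)⁻¹ • ∑ i' : Fin N,
    ψ (typeOf N1 i) (typeOf N1 i') (‖X i' - X i‖) • (X i' - X i)

/-- function represented by an RKHS element, `φ^{pq}(r) = ⟪φ^{pq}, K^{pq}_r⟫` -/
def rkhsFun {H : Fin 2 → Fin 2 → Type*} [∀ p q, NormedAddCommGroup (H p q)]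
    [∀ p q, InnerProductSpace ℝ (H p q)] (k : ∀ p q, ℝ → H p q)
    (φ : ∀ p q, H p q) : Fin 2 → Fin 2 → ℝ → ℝ :=
  fun p q r => ⟪φ p q, k p q r⟫

/-- continuity of the kernel on `[0,R]²` implies continuity of the feature map on `[0,R]` -/
lemma featureMap_continuousOn {H : Type*} [NormedAddCommGroup H] [InnerProductSpace ℝ H]
    (R : ℝ) (k : ℝ → H)
    (hK : ContinuousOn (fun rr : ℝ × ℝ => (⟪k rr.1, k rr.2⟫ : ℝ))
      (Set.Icc 0 R ×ˢ Set.Icc 0 R)) : ContinuousOn k (Set.Icc 0 R) := by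
  intro r₀ hr₀
  have hmem : (r₀, r₀) ∈ Set.Icc 0 R ×ˢ Set.Icc 0 R := Set.mk_mem_prod hr₀ hr₀
  have h1 : ContinuousWithinAt ((fun rr : ℝ × ℝ => (⟪k rr.1, k rr.2⟫ : ℝ)) ∘
      (fun r : ℝ => (r, r))) (Set.Icc 0 R) r₀ :=
    ContinuousWithinAt.comp (hK (r₀, r₀) hmem)
      ((continuous_id.prodMk continuous_id).continuousWithinAt)
      (fun r hr => Set.mk_mem_prod hr hr)
  have h2 : ContinuousWithinAt ((fun rr : ℝ × ℝ => (⟪k rr.1, k rr.2⟫ : ℝ)) ∘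
      (fun r : ℝ => (r, r₀))) (Set.Icc 0 R) r₀ :=
    ContinuousWithinAt.comp (hK (r₀, r₀) hmem)
      ((continuous_id.prodMk continuous_const).continuousWithinAt)
      (fun r hr => Set.mk_mem_prod hr hr₀)
  have hh : Filter.Tendsto
      (fun r => (⟪k r, k r⟫ : ℝ) - 2 * ⟪k r, k r₀⟫ + ⟪k r₀, k r₀⟫)
      (nhdsWithin r₀ (Set.Icc 0 R)) (nhds 0) := by
    have ht := (Filter.Tendsto.sub h1 (Filter.Tendsto.const_mul (2:ℝ) h2)).add
      (tendsto_const_nhds (x := (⟪k r₀, k r₀⟫ : ℝ)))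
    simp only [Function.comp] at ht
    have hz : (⟪k r₀, k r₀⟫ : ℝ) - 2 * ⟪k r₀, k r₀⟫ + ⟪k r₀, k r₀⟫ = 0 := by ring
    rw [hz] at ht
    exact ht
  have hd : Filter.Tendsto (fun r => dist (k r) (k r₀))
      (nhdsWithin r₀ (Set.Icc 0 R)) (nhds 0) := by
    have hs := (Real.continuous_sqrt.tendsto 0).comp hh
    rw [Real.sqrt_zero] at hs
    refine hs.congr fun r => ?_
    show Real.sqrt _ = _
    rw [dist_eq_norm, ← Real.sqrt_sq (norm_nonneg (k r - k r₀)), norm_sub_sq_real]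
    simp only [real_inner_self_eq_norm_sq]
  exact tendsto_iff_dist_tendsto_zero.2 hd

/-- the force field with clamped kernel arguments, as a map into the Hilbert
configuration space -/
def gF {d N : ℕ} (N1 : ℕ) (R : ℝ)
    {H : Fin 2 → Fin 2 → Type*} [∀ p q, NormedAddCommGroup (H p q)]
    [∀ p q, InnerProductSpace ℝ (H p q)]
    (k : ∀ p q, ℝ → H p q) (φ : ∀ p q, H p q) (X : Conf d N) : EConf d N :=
  WithLp.toLp 2 (forceField N1 (fun p q r => ⟪φ p q, k p q (max 0 (min r R))⟫) X)

section gFlemmas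

variable {d N N1 : ℕ} {R : ℝ}
    {H : Fin 2 → Fin 2 → Type*} [∀ p q, NormedAddCommGroup (H p q)]
    [∀ p q, InnerProductSpace ℝ (H p q)] (k : ∀ p q, ℝ → H p q)

lemma gF_add (φ ψ : ∀ p q, H p q) (X : Conf d N) :
    gF N1 R k (fun p q => φ p q + ψ p q) X = gF N1 R k φ X + gF N1 R k ψ X := by
  ext i
  simp only [gF, forceField, PiLp.toLp_apply, PiLp.add_apply, inner_add_left, add_smul,
    Finset.sum_add_distrib, smul_add]

lemma gF_smul (c : ℝ) (φ : ∀ p q, H p q) (X : Conf d N) :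
    gF N1 R k (fun p q => c • φ p q) X = c • gF N1 R k φ X := by
  ext i
  simp only [gF, forceField, PiLp.toLp_apply, PiLp.smul_apply, real_inner_smul_left, mul_smul,
    ← Finset.smul_sum]
  rw [smul_comm]

lemma gF_cont (hk : ∀ p q, Continuous fun r : ℝ => k p q (max 0 (min r R)))
    (φ : ∀ p q, H p q) : Continuous fun X : Conf d N => gF N1 R k φ X := by
  refine (PiLp.continuous_toLp 2 (fun _ : Fin N => EuclideanSpace ℝ (Fin d))).comp
    (f := fun X : Conf d N => forceField N1 (fun p q r => ⟪φ p q, k p q (max 0 (min r R))⟫) X) ?_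
  refine continuous_pi fun i => ?_
  simp only [forceField]
  refine Continuous.fun_const_smul ?_ _
  refine continuous_finset_sum _ fun i' _ => ?_
  have hsub : Continuous fun X : Conf d N => X i' - X i :=
    (continuous_apply i').sub (continuous_apply i)
  exact (Continuous.inner continuous_const ((hk _ _).comp hsub.norm)).fun_smul hsub

end gFlemmas

/-- The operator `A : ∏_{p,q} H_{K^{pq}} → L²(ρ_X)`, `Aφ = F_φ`, is a bounded linear
operator and satisfies `‖Aφ‖²_{L²(ρ_X)} ≤ ∑_{p,q} 2 κ_{pq}² R² ‖φ^{pq}‖²_{H_{K^{pq}}}`.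

Here `L²(ρ_X)` (whose inner product is `⟨f,g⟩ = (1/N) ∑ᵢ ∫ ⟪fᵢ, gᵢ⟫ dρ_X`) is realised
as `Lp (ℝ^{dN}) 2 ν` with `ν = (1/N) • ρ_X`, the product RKHS is realised as the
`PiLp 2`-product, and "the operator `Aφ = F_φ` is bounded linear" is rendered as the
existence of a continuous linear map agreeing `ν`-a.e. with `φ ↦ F_φ`. -/
theorem forceOperator_bounded
    (d N1 N2 : ℕ) (hd : 0 < d) (hN1 : 0 < N1) (hN2 : 0 < N2)
    (R : ℝ) (hR : 0 < R)
    (ρX : Measure (Conf d (N1 + N2))) [IsProbabilityMeasure ρX]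
    (hsupp : ∀ᵐ X ∂ρX, ∀ i i' : Fin (N1 + N2), ‖X i' - X i‖ ≤ R)
    (H : Fin 2 → Fin 2 → Type*) [∀ p q, NormedAddCommGroup (H p q)]
    [∀ p q, InnerProductSpace ℝ (H p q)] [∀ p q, CompleteSpace (H p q)]
    (k : ∀ p q, ℝ → H p q)
    -- Mercer: continuity of each `K^{pq}` on `[0,R]²`
    (hK_cont : ∀ p q, ContinuousOn (fun rr : ℝ × ℝ => (⟪k p q rr.1, k p q rr.2⟫ : ℝ))
      (Set.Icc 0 R ×ˢ Set.Icc 0 R))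
    -- `κ_{pq}² = sup_{r ∈ [0,R]} K^{pq}(r,r) < ∞`
    (κ : Fin 2 → Fin 2 → ℝ) (hκ0 : ∀ p q, 0 ≤ κ p q)
    (hκ : ∀ p q, IsLUB ((fun r => (⟪k p q r, k p q r⟫ : ℝ)) '' Set.Icc 0 R) ((κ p q) ^ 2)) :
    ∃ A : (PiLp 2 fun pq : Fin 2 × Fin 2 => H pq.1 pq.2) →L[ℝ]
        (Lp (EConf d (N1 + N2)) 2 (((N1 + N2 : ℕ) : ℝ≥0∞)⁻¹ • ρX)),
      (∀ φ : PiLp 2 fun pq : Fin 2 × Fin 2 => H pq.1 pq.2,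
        ∀ᵐ X ∂(((N1 + N2 : ℕ) : ℝ≥0∞)⁻¹ • ρX),
          (A φ) X = (WithLp.toLp 2 (forceField N1 (rkhsFun k (fun p q => φ (p, q))) X) : EConf d (N1 + N2)))
      ∧ ∀ φ : PiLp 2 fun pq : Fin 2 × Fin 2 => H pq.1 pq.2,
          ‖A φ‖ ^ 2 ≤ ∑ p : Fin 2, ∑ q : Fin 2, 2 * (κ p q) ^ 2 * R ^ 2 * ‖φ (p, q)‖ ^ 2 := by
  classical
  have hN : 0 < N1 + N2 := Nat.add_pos_left hN1 N2
  have hNR : ((N1 + N2 : ℕ) : ℝ) ≠ 0 := Nat.cast_ne_zero.2 hN.ne'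
  set ν : Measure (Conf d (N1 + N2)) := ((N1 + N2 : ℕ) : ℝ≥0∞)⁻¹ • ρX with hνdef
  haveI : IsFiniteMeasure ν := by
    constructor
    rw [hνdef, Measure.smul_apply, smul_eq_mul, measure_univ, mul_one]
    exact ENNReal.inv_lt_top.2 (by exact_mod_cast hN)
  have hνuniv : ν Set.univ = ((N1 + N2 : ℕ) : ℝ≥0∞)⁻¹ := by
    rw [hνdef, Measure.smul_apply, smul_eq_mul, measure_univ, mul_one]
  -- clamping
  have hcl_mem : ∀ r : ℝ, max 0 (min r R) ∈ Set.Icc 0 R := fun r =>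
    ⟨le_max_left _ _, max_le hR.le (min_le_right _ _)⟩
  have hcl_eq : ∀ r : ℝ, 0 ≤ r → r ≤ R → max 0 (min r R) = r := fun r h0 hr => by
    rw [min_eq_left hr, max_eq_right h0]
  -- continuity of the clamped feature maps
  have hk_cont : ∀ p q, Continuous fun r : ℝ => k p q (max 0 (min r R)) := by
    intro p q
    exact (featureMap_continuousOn R (k p q) (hK_cont p q)).comp_continuous
      (continuous_const.max (continuous_id.min continuous_const)) hcl_mem
  -- norm bound for the clamped feature maps
  have hk_norm : ∀ p q (r : ℝ), ‖k p q (max 0 (min r R))‖ ≤ κ p q := by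
    intro p q r
    have h1 : (⟪k p q (max 0 (min r R)), k p q (max 0 (min r R))⟫ : ℝ) ≤ (κ p q) ^ 2 :=
      (hκ p q).1 ⟨max 0 (min r R), hcl_mem r, rfl⟩
    rw [real_inner_self_eq_norm_sq] at h1
    nlinarith [norm_nonneg (k p q (max 0 (min r R))), hκ0 p q]
  -- the (clamped) operator, pointwise
  set M : (PiLp 2 fun pq : Fin 2 × Fin 2 => H pq.1 pq.2) → ℝ :=
    fun φ => ∑ p : Fin 2, ∑ q : Fin 2, 2 * (κ p q) ^ 2 * R ^ 2 * ‖φ (p, q)‖ ^ 2 with hMdef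
  have hM0 : ∀ φ, 0 ≤ M φ := by
    intro φ; rw [hMdef]; positivity
  -- coordinatewise bound
  have hcoord : ∀ (φ : PiLp 2 fun pq : Fin 2 × Fin 2 => H pq.1 pq.2)
      (X : Conf d (N1 + N2)), (∀ i i' : Fin (N1 + N2), ‖X i' - X i‖ ≤ R) →
      ∀ i, ‖gF N1 R k (fun p q => φ (p, q)) X i‖ ^ 2 ≤ M φ := by
    intro φ X hX i
    set p : Fin 2 := typeOf N1 i with hp
    set a : Fin 2 → ℝ := fun q => κ p q * ‖φ (p, q)‖ with ha
    have ha0 : ∀ q, 0 ≤ a q := fun q => mul_nonneg (hκ0 p q) (norm_nonneg _)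
    have hterm : ∀ i' : Fin (N1 + N2),
        ‖(⟪φ (p, typeOf N1 i'), k p (typeOf N1 i') (max 0 (min ‖X i' - X i‖ R))⟫ : ℝ)
          • (X i' - X i)‖ ≤ (a 0 + a 1) * R := by
      intro i'
      rw [norm_smul]
      have h1 : ‖(⟪φ (p, typeOf N1 i'),
          k p (typeOf N1 i') (max 0 (min ‖X i' - X i‖ R))⟫ : ℝ)‖ ≤ a (typeOf N1 i') := by
        rw [Real.norm_eq_abs]
        refine le_trans (abs_real_inner_le_norm _ _) ?_
        have hq : a (typeOf N1 i') = κ p (typeOf N1 i') * ‖φ (p, typeOf N1 i')‖ := rfl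
        rw [hq, mul_comm (κ p (typeOf N1 i'))]
        exact mul_le_mul_of_nonneg_left (hk_norm _ _ _) (norm_nonneg _)
      have h2 : a (typeOf N1 i') ≤ a 0 + a 1 := by
        have h0 := ha0 0; have h1' := ha0 1
        rcases (show typeOf N1 i' = 0 ∨ typeOf N1 i' = 1 from by
          unfold typeOf; split <;> simp) with h | h <;> rw [h] <;> linarith
      exact mul_le_mul (le_trans h1 h2) (hX i i') (norm_nonneg _)
        (add_nonneg (ha0 0) (ha0 1))
    have hnormi : ‖gF N1 R k (fun p q => φ (p, q)) X i‖ ≤ (a 0 + a 1) * R := by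
      show ‖((N1 + N2 : ℕ) : ℝ)⁻¹ • ∑ i' : Fin (N1 + N2), _‖ ≤ _
      rw [norm_smul, Real.norm_eq_abs, abs_of_nonneg (by positivity)]
      have hsum : ‖∑ i' : Fin (N1 + N2),
          (⟪φ (p, typeOf N1 i'), k p (typeOf N1 i') (max 0 (min ‖X i' - X i‖ R))⟫ : ℝ)
            • (X i' - X i)‖ ≤ ((N1 + N2 : ℕ) : ℝ) * ((a 0 + a 1) * R) := by
        refine le_trans (norm_sum_le _ _) ?_
        calc ∑ i' : Fin (N1 + N2), ‖(⟪φ (p, typeOf N1 i'),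
              k p (typeOf N1 i') (max 0 (min ‖X i' - X i‖ R))⟫ : ℝ) • (X i' - X i)‖
            ≤ ∑ _i' : Fin (N1 + N2), (a 0 + a 1) * R :=
              Finset.sum_le_sum fun i' _ => hterm i'
          _ = ((N1 + N2 : ℕ) : ℝ) * ((a 0 + a 1) * R) := by
              rw [Finset.sum_const, Finset.card_univ, Fintype.card_fin, nsmul_eq_mul]
      calc ((N1 + N2 : ℕ) : ℝ)⁻¹ * ‖∑ i' : Fin (N1 + N2), _‖
          ≤ ((N1 + N2 : ℕ) : ℝ)⁻¹ * (((N1 + N2 : ℕ) : ℝ) * ((a 0 + a 1) * R)) :=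
            mul_le_mul_of_nonneg_left hsum (by positivity)
        _ = (a 0 + a 1) * R := by
            rw [← mul_assoc, inv_mul_cancel₀ hNR, one_mul]
    have hub : ((a 0 + a 1) * R) ^ 2 ≤ M φ := by
      have h00 : a 0 = κ p 0 * ‖φ (p, 0)‖ := rfl
      have h11 : a 1 = κ p 1 * ‖φ (p, 1)‖ := rfl
      rw [hMdef]
      simp only [Fin.sum_univ_two]
      rw [h00, h11]
      have hp2 : p = 0 ∨ p = 1 := by
        rw [hp]; unfold typeOf; split <;> simp
      rcases hp2 with h | h <;> rw [h] <;>
        nlinarith [sq_nonneg ((κ 0 0 * ‖φ (0, 0)‖ - κ 0 1 * ‖φ (0, 1)‖) * R),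
          sq_nonneg ((κ 1 0 * ‖φ (1, 0)‖ - κ 1 1 * ‖φ (1, 1)‖) * R),
          mul_nonneg (mul_nonneg (mul_nonneg (by norm_num : (0:ℝ) ≤ 2)
            (sq_nonneg (κ 0 0))) (sq_nonneg R)) (sq_nonneg ‖φ ((0 : Fin 2), (0 : Fin 2))‖),
          mul_nonneg (mul_nonneg (mul_nonneg (by norm_num : (0:ℝ) ≤ 2)
            (sq_nonneg (κ 0 1))) (sq_nonneg R)) (sq_nonneg ‖φ ((0 : Fin 2), (1 : Fin 2))‖),
          mul_nonneg (mul_nonneg (mul_nonneg (by norm_num : (0:ℝ) ≤ 2)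
            (sq_nonneg (κ 1 0))) (sq_nonneg R)) (sq_nonneg ‖φ ((1 : Fin 2), (0 : Fin 2))‖),
          mul_nonneg (mul_nonneg (mul_nonneg (by norm_num : (0:ℝ) ≤ 2)
            (sq_nonneg (κ 1 1))) (sq_nonneg R)) (sq_nonneg ‖φ ((1 : Fin 2), (1 : Fin 2))‖)]
    calc ‖gF N1 R k (fun p q => φ (p, q)) X i‖ ^ 2
        ≤ ((a 0 + a 1) * R) ^ 2 := by
          refine pow_le_pow_left₀ (norm_nonneg _) hnormi 2
      _ ≤ M φ := hub
  -- global a.e. bound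
  have hbd : ∀ φ : PiLp 2 fun pq : Fin 2 × Fin 2 => H pq.1 pq.2,
      ∀ᵐ X ∂ν, ‖gF N1 R k (fun p q => φ (p, q)) X‖ ≤
        Real.sqrt (((N1 + N2 : ℕ) : ℝ) * M φ) := by
    intro φ
    have hs : ∀ᵐ X ∂ν, ∀ i i' : Fin (N1 + N2), ‖X i' - X i‖ ≤ R := by
      rw [hνdef]; exact Measure.ae_smul_measure hsupp _
    filter_upwards [hs] with X hX
    rw [Real.le_sqrt (norm_nonneg _) (mul_nonneg (Nat.cast_nonneg _) (hM0 φ))]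
    rw [PiLp.norm_sq_eq_of_L2]
    calc ∑ i, ‖gF N1 R k (fun p q => φ (p, q)) X i‖ ^ 2
        ≤ ∑ _i : Fin (N1 + N2), M φ := Finset.sum_le_sum fun i _ => hcoord φ X hX i
      _ = ((N1 + N2 : ℕ) : ℝ) * M φ := by
          rw [Finset.sum_const, Finset.card_univ, Fintype.card_fin, nsmul_eq_mul]
  -- membership in L²
  have hMem : ∀ φ : PiLp 2 fun pq : Fin 2 × Fin 2 => H pq.1 pq.2,
      MemLp (fun X => gF N1 R k (fun p q => φ (p, q)) X) 2 ν := by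
    intro φ
    exact MemLp.of_bound ((gF_cont k hk_cont _).aestronglyMeasurable) _ (hbd φ)
  -- the norm bound for toLp
  have hAle : ∀ φ : PiLp 2 fun pq : Fin 2 × Fin 2 => H pq.1 pq.2,
      ‖(hMem φ).toLp _‖ ≤ Real.sqrt (M φ) := by
    intro φ
    rw [Lp.norm_toLp]
    have h1 := eLpNorm_le_of_ae_bound (p := 2) (μ := ν) (hbd φ)
    have hfin : ν Set.univ ^ ((2 : ℝ≥0∞).toReal)⁻¹
        * ENNReal.ofReal (Real.sqrt (((N1 + N2 : ℕ) : ℝ) * M φ)) ≠ ⊤ := by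
      refine ENNReal.mul_ne_top (ENNReal.rpow_ne_top_of_nonneg (by positivity) ?_)
        ENNReal.ofReal_ne_top
      rw [hνuniv]
      exact ENNReal.inv_ne_top.2 (by exact_mod_cast hN.ne')
    refine le_trans (ENNReal.toReal_mono hfin h1) (le_of_eq ?_)
    rw [hνuniv, ENNReal.toReal_mul, ← ENNReal.toReal_rpow, ENNReal.toReal_inv,
      ENNReal.toReal_natCast, ENNReal.toReal_ofReal (Real.sqrt_nonneg _)]
    have h2 : ((2 : ℝ≥0∞).toReal)⁻¹ = 1 / (2 : ℝ) := by norm_num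
    rw [h2, ← Real.sqrt_eq_rpow, ← Real.sqrt_mul (by positivity), ← mul_assoc,
      inv_mul_cancel₀ hNR, one_mul]
  -- the linear map
  set Λ : (PiLp 2 fun pq : Fin 2 × Fin 2 => H pq.1 pq.2) →ₗ[ℝ]
      Lp (EConf d (N1 + N2)) 2 ν :=
    { toFun := fun φ => (hMem φ).toLp _
      map_add' := fun φ ψ => by
        rw [← MemLp.toLp_add (hMem φ) (hMem ψ)]
        refine MemLp.toLp_congr _ _ (Filter.EventuallyEq.of_eq ?_)
        funext X
        exact gF_add k _ _ X
      map_smul' := fun c φ => by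
        simp only [RingHom.id_apply]
        rw [← MemLp.toLp_const_smul c (hMem φ)]
        refine MemLp.toLp_congr _ _ (Filter.EventuallyEq.of_eq ?_)
        funext X
        exact gF_smul k c _ X } with hΛdef
  have hC0 : (0:ℝ) ≤ ∑ p : Fin 2, ∑ q : Fin 2, 2 * (κ p q) ^ 2 * R ^ 2 := by positivity
  have hΛbd : ∀ φ, ‖Λ φ‖ ≤
      Real.sqrt (∑ p : Fin 2, ∑ q : Fin 2, 2 * (κ p q) ^ 2 * R ^ 2) * ‖φ‖ := by
    intro φ
    refine le_trans (hAle φ) ?_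
    have hMle : M φ ≤ (∑ p : Fin 2, ∑ q : Fin 2, 2 * (κ p q) ^ 2 * R ^ 2) * ‖φ‖ ^ 2 := by
      rw [hMdef, Finset.sum_mul]
      refine Finset.sum_le_sum fun p _ => ?_
      rw [Finset.sum_mul]
      refine Finset.sum_le_sum fun q _ => ?_
      have hφle : ‖φ (p, q)‖ ^ 2 ≤ ‖φ‖ ^ 2 := by
        rw [PiLp.norm_sq_eq_of_L2]
        exact Finset.single_le_sum (f := fun pq : Fin 2 × Fin 2 => ‖φ pq‖ ^ 2)
          (fun _ _ => sq_nonneg _) (Finset.mem_univ (p, q))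
      exact mul_le_mul_of_nonneg_left hφle (by positivity)
    refine le_trans (Real.sqrt_le_sqrt hMle) (le_of_eq ?_)
    rw [Real.sqrt_mul hC0, Real.sqrt_sq (norm_nonneg _)]
  refine ⟨Λ.mkContinuous _ hΛbd, ?_, ?_⟩
  · intro φ
    have h1 : (Λ.mkContinuous _ hΛbd) φ = (hMem φ).toLp _ := rfl
    rw [h1]
    have h2 := MemLp.coeFn_toLp (hMem φ)
    have hs : ∀ᵐ X ∂ν, ∀ i i' : Fin (N1 + N2), ‖X i' - X i‖ ≤ R := by
      rw [hνdef]; exact Measure.ae_smul_measure hsupp _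
    filter_upwards [h2, hs] with X hX2 hXs
    rw [hX2]
    show gF N1 R k (fun p q => φ (p, q)) X = _
    ext i : 1
    show ((N1 + N2 : ℕ) : ℝ)⁻¹ • (_ : EuclideanSpace ℝ (Fin d)) = ((N1 + N2 : ℕ) : ℝ)⁻¹ • (_ : EuclideanSpace ℝ (Fin d))
    congr 1
    refine Finset.sum_congr rfl fun i' _ => ?_
    beta_reduce
    rw [hcl_eq _ (norm_nonneg _) (hXs i i')]
    rfl
  · intro φ
    have h1 : ‖(Λ.mkContinuous _ hΛbd) φ‖ = ‖(hMem φ).toLp _‖ := rfl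
    rw [h1]
    calc ‖(hMem φ).toLp _‖ ^ 2 ≤ Real.sqrt (M φ) ^ 2 :=
          pow_le_pow_left₀ (norm_nonneg _) (hAle φ) 2
      _ = M φ := Real.sq_sqrt (hM0 φ)

end
end

section
/- Assume each displacement map X ↦ x_{i'}−x_i belongs to L²(ρ_X). Then the adjoint A*: L²(ρ_X) → ∏_{p,q} H_{K^{pq}} of the bounded operator Aφ = F_φ is given, for g = (g₁,…,g_N) ∈ L²(ρ_X), by the Bochner integrals (A*g)^{pq} = ∫ (1/N²) Σ_{i∈I_p} Σ_{i'∈I_q, i'≠i} K^{pq}_{r_{ii'}} ⟨𝐫_{ii'}, g_i(X)⟩ dρ_X(X) ∈ H_{K^{pq}}, for each (p,q) ∈ {1,2}². -/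
open MeasureTheory
open scoped BigOperators ENNReal RealInnerProductSpace

set_option synthInstance.maxHeartbeats 1000000
set_option maxHeartbeats 1000000

noncomputable section

/-- finite `PiLp`-products of complete spaces are complete -/
instance piLpProdComplete (H : Fin 2 → Fin 2 → Type*) [∀ p q, NormedAddCommGroup (H p q)]
    [∀ p q, CompleteSpace (H p q)] :
    CompleteSpace (PiLp 2 fun pq : Fin 2 × Fin 2 => H pq.1 pq.2) :=
  inferInstance

/-- continuity of the RKHS section map from continuity of the kernel -/
lemma kernel_sections_continuousOn {H : Type*} [NormedAddCommGroup H] [InnerProductSpace ℝ H]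
    (k : ℝ → H) (R : ℝ)
    (hK : ContinuousOn (fun rr : ℝ × ℝ => (⟪k rr.1, k rr.2⟫ : ℝ))
      (Set.Icc 0 R ×ˢ Set.Icc 0 R)) :
    ContinuousOn k (Set.Icc 0 R) := by
  intro r₀ hr₀
  have key : ∀ f : ℝ → ℝ × ℝ, Continuous f →
      Set.MapsTo f (Set.Icc 0 R) (Set.Icc (0:ℝ) R ×ˢ Set.Icc (0:ℝ) R) →
      Filter.Tendsto (fun r => (⟪k (f r).1, k (f r).2⟫ : ℝ)) (nhdsWithin r₀ (Set.Icc 0 R))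
        (nhds (⟪k (f r₀).1, k (f r₀).2⟫ : ℝ)) := by
    intro f hf hmaps
    exact (hK (f r₀) (hmaps hr₀)).comp hf.continuousWithinAt hmaps
  have t1 := key (fun r => (r, r)) (continuous_id.prodMk continuous_id)
    (fun x hx => ⟨hx, hx⟩)
  have t2 := key (fun r => (r, r₀)) (continuous_id.prodMk continuous_const)
    (fun x hx => ⟨hx, hr₀⟩)
  have hd : Filter.Tendsto
      (fun r => (⟪k r, k r⟫ : ℝ) - 2 * ⟪k r, k r₀⟫ + ⟪k r₀, k r₀⟫)
      (nhdsWithin r₀ (Set.Icc 0 R)) (nhds 0) := by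
    have h := (t1.sub (t2.const_mul 2)).add (tendsto_const_nhds
      (x := (⟪k r₀, k r₀⟫ : ℝ)))
    have h0 : (⟪k r₀, k r₀⟫ : ℝ) - 2 * ⟪k r₀, k r₀⟫ + ⟪k r₀, k r₀⟫ = 0 := by ring
    rwa [h0] at h
  have hs : Filter.Tendsto (fun r => Real.sqrt
      ((⟪k r, k r⟫ : ℝ) - 2 * ⟪k r, k r₀⟫ + ⟪k r₀, k r₀⟫))
      (nhdsWithin r₀ (Set.Icc 0 R)) (nhds 0) := by
    have := (Real.continuous_sqrt.tendsto 0).comp hd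
    rwa [Real.sqrt_zero] at this
  rw [ContinuousWithinAt, tendsto_iff_dist_tendsto_zero]
  refine hs.congr fun r => ?_
  rw [dist_eq_norm, norm_eq_sqrt_real_inner, real_inner_sub_sub_self]

/-- a component of a `PiLp 2` vector is bounded by its norm -/
lemma pilp_apply_norm_le {ι : Type*} [Fintype ι] {β : ι → Type*}
    [∀ i, SeminormedAddCommGroup (β i)] (x : PiLp 2 β) (i : ι) : ‖x i‖ ≤ ‖x‖ := by
  have h := PiLp.norm_sq_eq_of_L2 β x
  have h2 : ‖x i‖ ^ 2 ≤ ∑ j, ‖x j‖ ^ 2 :=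
    Finset.single_le_sum (f := fun j => ‖x j‖ ^ 2) (fun j _ => sq_nonneg _) (Finset.mem_univ i)
  nlinarith [norm_nonneg x, norm_nonneg (x i)]

/-- integrability of the single-pair adjoint integrand -/
lemma pair_integrand_integrable {d N : ℕ} {ρX : Measure (Conf d N)}
    [IsProbabilityMeasure ρX] {R : ℝ} (hR : 0 < R)
    (hsupp : ∀ᵐ X ∂ρX, ∀ i i' : Fin N, ‖X i' - X i‖ ≤ R)
    {H : Type*} [NormedAddCommGroup H] [InnerProductSpace ℝ H]
    {k : ℝ → H} (hkc : ContinuousOn k (Set.Icc 0 R))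
    {κ : ℝ} (hkb : ∀ r ∈ Set.Icc (0:ℝ) R, ‖k r‖ ≤ κ)
    {g : Conf d N → EConf d N} (hg : Integrable g ρX) (i i' : Fin N) :
    Integrable (fun X => (⟪X i' - X i, g X i⟫ : ℝ) • k ‖X i' - X i‖) ρX := by
  have hcont_norm : Continuous fun X : Conf d N => ‖X i' - X i‖ :=
    ((continuous_apply i').sub (continuous_apply i)).norm
  have hmem : ∀ X : Conf d N, min ‖X i' - X i‖ R ∈ Set.Icc (0:ℝ) R :=
    fun X => ⟨le_min (norm_nonneg _) hR.le, min_le_right _ _⟩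
  have hkccont : Continuous fun X : Conf d N => k (min ‖X i' - X i‖ R) :=
    hkc.comp_continuous (hcont_norm.min continuous_const) fun X => hmem X
  have hginner : AEStronglyMeasurable
      (fun X : Conf d N => (⟪X i' - X i, g X i⟫ : ℝ)) ρX := by
    have h1 : AEStronglyMeasurable (fun X : Conf d N => X i' - X i) ρX :=
      ((continuous_apply i').sub (continuous_apply i)).aestronglyMeasurable
    have h2 : AEStronglyMeasurable (fun X : Conf d N => g X i) ρX :=
      (by fun_prop : Continuous fun x : EConf d N => x i).comp_aestronglyMeasurable
        hg.aestronglyMeasurable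
    exact h1.inner h2
  have hsm : AEStronglyMeasurable
      (fun X => (⟪X i' - X i, g X i⟫ : ℝ) • k ‖X i' - X i‖) ρX := by
    refine (hginner.smul hkccont.aestronglyMeasurable).congr ?_
    filter_upwards [hsupp] with X hX
    show (⟪X i' - X i, g X i⟫ : ℝ) • k (min ‖X i' - X i‖ R) = _
    rw [min_eq_left (hX i i')]
  refine Integrable.mono' ((hg.norm.const_mul (R * κ))) hsm ?_
  filter_upwards [hsupp] with X hX
  have hκ0 : 0 ≤ κ := le_trans (norm_nonneg _) (hkb 0 ⟨le_refl _, hR.le⟩)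
  have hb1 : ‖k ‖X i' - X i‖‖ ≤ κ := hkb _ ⟨norm_nonneg _, hX i i'⟩
  have hb2 : |(⟪X i' - X i, g X i⟫ : ℝ)| ≤ R * ‖g X‖ := by
    calc |(⟪X i' - X i, g X i⟫ : ℝ)| ≤ ‖X i' - X i‖ * ‖g X i‖ := abs_real_inner_le_norm _ _
      _ ≤ R * ‖g X‖ := by
          apply mul_le_mul (hX i i') (pilp_apply_norm_le (g X) i) (norm_nonneg _) hR.le
  calc ‖(⟪X i' - X i, g X i⟫ : ℝ) • k ‖X i' - X i‖‖
      = |(⟪X i' - X i, g X i⟫ : ℝ)| * ‖k ‖X i' - X i‖‖ := by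
        rw [norm_smul, Real.norm_eq_abs]
    _ ≤ (R * ‖g X‖) * κ := by
        apply mul_le_mul hb2 hb1 (norm_nonneg _) (by positivity)
    _ = R * κ * ‖g X‖ := by ring

/-- the `(p,q)` integrand of the adjoint formula -/
def adjInt {d N : ℕ} (N1 : ℕ) {H : Fin 2 → Fin 2 → Type*} [∀ p q, NormedAddCommGroup (H p q)]
    [∀ p q, InnerProductSpace ℝ (H p q)] (k : ∀ p q, ℝ → H p q)
    (g : Conf d N → Conf d N) (pq : Fin 2 × Fin 2) (X : Conf d N) : H pq.1 pq.2 :=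
  (((N : ℕ) : ℝ) ^ 2)⁻¹ • ∑ i : Fin N, ∑ i' : Fin N,
    (if typeOf N1 i = pq.1 ∧ typeOf N1 i' = pq.2 ∧ i' ≠ i then
      (⟪X i' - X i, g X i⟫ : ℝ) • k pq.1 pq.2 (‖X i' - X i‖) else 0)

/-- Assume each displacement map `X ↦ x_{i'} − x_i` belongs to `L²(ρ_X)`.  Then the adjoint
`A* : L²(ρ_X) → ∏_{p,q} H_{K^{pq}}` of the bounded operator `Aφ = F_φ` is given, for
`g = (g₁,…,g_N) ∈ L²(ρ_X)`, by the Bochner integrals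
`(A*g)^{pq} = ∫ (1/N²) ∑_{i ∈ I_p} ∑_{i' ∈ I_q, i' ≠ i} K^{pq}_{r_{ii'}}
  ⟪𝐫_{ii'}, g_i(X)⟫ dρ_X(X) ∈ H_{K^{pq}}`. -/
theorem forceOperator_adjoint
    (d N1 N2 : ℕ) (hd : 0 < d) (hN1 : 0 < N1) (hN2 : 0 < N2)
    (R : ℝ) (hR : 0 < R)
    (ρX : Measure (Conf d (N1 + N2))) [IsProbabilityMeasure ρX]
    (hsupp : ∀ᵐ X ∂ρX, ∀ i i' : Fin (N1 + N2), ‖X i' - X i‖ ≤ R)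
    -- each displacement map `X ↦ x_{i'} − x_i` lies in `L²(ρ_X)`
    (hdisp : ∀ i i' : Fin (N1 + N2),
      MemLp (fun X : Conf d (N1 + N2) => X i' - X i) 2 ρX)
    (H : Fin 2 → Fin 2 → Type*) [∀ p q, NormedAddCommGroup (H p q)]
    [∀ p q, InnerProductSpace ℝ (H p q)] [∀ p q, CompleteSpace (H p q)]
    (k : ∀ p q, ℝ → H p q)
    (hK_cont : ∀ p q, ContinuousOn (fun rr : ℝ × ℝ => (⟪k p q rr.1, k p q rr.2⟫ : ℝ))
      (Set.Icc 0 R ×ˢ Set.Icc 0 R))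
    (κ : Fin 2 → Fin 2 → ℝ) (hκ0 : ∀ p q, 0 ≤ κ p q)
    (hκ : ∀ p q, IsLUB ((fun r => (⟪k p q r, k p q r⟫ : ℝ)) '' Set.Icc 0 R) ((κ p q) ^ 2))
    -- `A` is the bounded operator with `Aφ = F_φ`
    (A : (PiLp 2 fun pq : Fin 2 × Fin 2 => H pq.1 pq.2) →L[ℝ]
        (Lp (EConf d (N1 + N2)) 2 (((N1 + N2 : ℕ) : ℝ≥0∞)⁻¹ • ρX)))
    (hA : ∀ φ : PiLp 2 fun pq : Fin 2 × Fin 2 => H pq.1 pq.2,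
      ∀ᵐ X ∂(((N1 + N2 : ℕ) : ℝ≥0∞)⁻¹ • ρX),
        (A φ) X = (WithLp.toLp 2 (forceField N1 (rkhsFun k (fun p q => φ (p, q))) X) : EConf d (N1 + N2))) :
    ∀ g : Lp (EConf d (N1 + N2)) 2 (((N1 + N2 : ℕ) : ℝ≥0∞)⁻¹ • ρX),
      ContinuousLinearMap.adjoint A g =
        (WithLp.toLp 2 (fun pq : Fin 2 × Fin 2 =>
          ∫ X, ((((N1 + N2 : ℕ) : ℝ) ^ 2)⁻¹ •
            ∑ i : Fin (N1 + N2), ∑ i' : Fin (N1 + N2),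
              (if typeOf N1 i = pq.1 ∧ typeOf N1 i' = pq.2 ∧ i' ≠ i then
                (⟪X i' - X i, (g X : Conf d (N1 + N2)) i⟫ : ℝ) •
                  k pq.1 pq.2 (‖X i' - X i‖)
              else 0)) ∂ρX) :
          PiLp 2 fun pq : Fin 2 × Fin 2 => H pq.1 pq.2) := by
  intro g
  have hNpos : 0 < N1 + N2 := Nat.add_pos_left hN1 _
  have hNne : ((N1 + N2 : ℕ) : ℝ) ≠ 0 := Nat.cast_ne_zero.2 hNpos.ne'
  have hc0 : (((N1 + N2 : ℕ) : ℝ≥0∞))⁻¹ ≠ 0 := ENNReal.inv_ne_zero.2 (ENNReal.natCast_ne_top _)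
  have hcT : (((N1 + N2 : ℕ) : ℝ≥0∞))⁻¹ ≠ ⊤ :=
    ENNReal.inv_ne_top.2 (by exact_mod_cast hNpos.ne')
  haveI hfin : IsFiniteMeasure (((N1 + N2 : ℕ) : ℝ≥0∞)⁻¹ • ρX) := by
    constructor
    rw [Measure.smul_apply, smul_eq_mul, measure_univ, mul_one]
    exact lt_top_iff_ne_top.2 hcT
  have hgInt : Integrable (fun X => g X) ρX := by
    have h1 : Integrable (fun X => g X) (((N1 + N2 : ℕ) : ℝ≥0∞)⁻¹ • ρX) :=
      (Lp.memLp g).integrable one_le_two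
    exact (integrable_smul_measure hc0 hcT).1 h1
  have hkc : ∀ p q, ContinuousOn (k p q) (Set.Icc 0 R) :=
    fun p q => kernel_sections_continuousOn (k p q) R (hK_cont p q)
  have hkb : ∀ p q, ∀ r ∈ Set.Icc (0:ℝ) R, ‖k p q r‖ ≤ κ p q := by
    intro p q r hr
    have h1 : (⟪k p q r, k p q r⟫ : ℝ) ≤ (κ p q) ^ 2 := (hκ p q).1 ⟨r, hr, rfl⟩
    have h2 : ‖k p q r‖ ^ 2 ≤ (κ p q) ^ 2 := by rwa [real_inner_self_eq_norm_sq] at h1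
    nlinarith [norm_nonneg (k p q r), hκ0 p q]
  have hSint : ∀ pq : Fin 2 × Fin 2,
      Integrable (adjInt N1 k (fun X => (g X : Conf d (N1 + N2))) pq) ρX := by
    intro pq
    have hsum : Integrable (fun X => ∑ i : Fin (N1 + N2), ∑ i' : Fin (N1 + N2),
        (if typeOf N1 i = pq.1 ∧ typeOf N1 i' = pq.2 ∧ i' ≠ i then
          (⟪X i' - X i, (g X : Conf d (N1 + N2)) i⟫ : ℝ) • k pq.1 pq.2 (‖X i' - X i‖)
        else 0)) ρX := by
      refine integrable_finset_sum _ fun i _ => integrable_finset_sum _ fun i' _ => ?_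
      by_cases hcond : typeOf N1 i = pq.1 ∧ typeOf N1 i' = pq.2 ∧ i' ≠ i
      · simp only [if_pos hcond]
        exact pair_integrand_integrable hR hsupp (hkc pq.1 pq.2) (hkb pq.1 pq.2) hgInt i i'
      · simp only [if_neg hcond]
        exact integrable_zero _ _ _
    have := hsum.smul ((((N1 + N2 : ℕ) : ℝ) ^ 2)⁻¹)
    exact this
  -- the pointwise identity
  refine ext_inner_right ℝ fun φ => ?_
  rw [ContinuousLinearMap.adjoint_inner_left, MeasureTheory.L2.inner_def]
  have hAe : ∫ X, (⟪g X, (A φ) X⟫ : ℝ) ∂(((N1 + N2 : ℕ) : ℝ≥0∞)⁻¹ • ρX)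
      = ∫ X, (⟪g X, (WithLp.toLp 2 (forceField N1 (rkhsFun k (fun p q => φ (p, q))) X) :
          EConf d (N1 + N2))⟫ : ℝ) ∂(((N1 + N2 : ℕ) : ℝ≥0∞)⁻¹ • ρX) :=
    integral_congr_ae ((hA φ).mono fun X hX => by simp only [hX])
  rw [hAe, integral_smul_measure]
  have htR : ((((N1 + N2 : ℕ) : ℝ≥0∞))⁻¹).toReal = (((N1 + N2 : ℕ) : ℝ))⁻¹ := by
    rw [ENNReal.toReal_inv, ENNReal.toReal_natCast]
  rw [htR, smul_eq_mul]
  have hpt : ∀ X : Conf d (N1 + N2),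
      (⟪g X, (WithLp.toLp 2 (forceField N1 (rkhsFun k (fun p q => φ (p, q))) X) : EConf d (N1 + N2))⟫ : ℝ)
      = ((N1 + N2 : ℕ) : ℝ) * ∑ pq : Fin 2 × Fin 2,
          (⟪φ pq, adjInt N1 k (fun X => (g X : Conf d (N1 + N2))) pq X⟫ : ℝ) := by
    intro X
    have hL : (⟪g X, (WithLp.toLp 2 (forceField N1 (rkhsFun k (fun p q => φ (p, q))) X) :
        EConf d (N1 + N2))⟫ : ℝ)
        = ((N1 + N2 : ℕ) : ℝ)⁻¹ * ∑ i : Fin (N1 + N2), ∑ i' : Fin (N1 + N2),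
            (⟪X i' - X i, (g X : Conf d (N1 + N2)) i⟫ : ℝ) *
              ⟪φ (typeOf N1 i, typeOf N1 i'),
                k (typeOf N1 i) (typeOf N1 i') ‖X i' - X i‖⟫ := by
      rw [PiLp.inner_apply, Finset.mul_sum]
      refine Finset.sum_congr rfl fun i _ => ?_
      show (⟪(g X : Conf d (N1 + N2)) i, forceField N1 (rkhsFun k (fun p q => φ (p, q))) X i⟫ : ℝ) = _
      rw [show (forceField N1 (rkhsFun k (fun p q => φ (p, q))) X i : EuclideanSpace ℝ (Fin d))
          = ((N1 + N2 : ℕ) : ℝ)⁻¹ • ∑ i' : Fin (N1 + N2),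
              (⟪φ (typeOf N1 i, typeOf N1 i'),
                k (typeOf N1 i) (typeOf N1 i') ‖X i' - X i‖⟫ : ℝ) • (X i' - X i) from rfl]
      rw [real_inner_smul_right, inner_sum, Finset.mul_sum, Finset.mul_sum]
      refine Finset.sum_congr rfl fun i' _ => ?_
      rw [real_inner_smul_right, real_inner_comm ((g X : Conf d (N1 + N2)) i)]
      ring
    have hswap : ∀ i i' : Fin (N1 + N2),
        (∑ pq : Fin 2 × Fin 2,
          if typeOf N1 i = pq.1 ∧ typeOf N1 i' = pq.2 ∧ i' ≠ i then
            (⟪X i' - X i, (g X : Conf d (N1 + N2)) i⟫ : ℝ) *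
              ⟪φ pq, k pq.1 pq.2 ‖X i' - X i‖⟫ else 0)
        = (⟪X i' - X i, (g X : Conf d (N1 + N2)) i⟫ : ℝ) *
            ⟪φ (typeOf N1 i, typeOf N1 i'),
              k (typeOf N1 i) (typeOf N1 i') ‖X i' - X i‖⟫ := by
      intro i i'
      rcases eq_or_ne i' i with h | h
      · subst h
        simp [sub_self]
      · rw [Finset.sum_eq_single (typeOf N1 i, typeOf N1 i')]
        · rw [if_pos ⟨rfl, rfl, h⟩]
        · intro b _ hb
          rw [if_neg]
          rintro ⟨h1, h2, -⟩
          exact hb (Prod.ext h1.symm h2.symm)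
        · intro hmem; exact absurd (Finset.mem_univ _) hmem
    have hR2 : ∑ pq : Fin 2 × Fin 2,
        (⟪φ pq, adjInt N1 k (fun X => (g X : Conf d (N1 + N2))) pq X⟫ : ℝ)
        = ((((N1 + N2 : ℕ) : ℝ)) ^ 2)⁻¹ * ∑ i : Fin (N1 + N2), ∑ i' : Fin (N1 + N2),
            (⟪X i' - X i, (g X : Conf d (N1 + N2)) i⟫ : ℝ) *
              ⟪φ (typeOf N1 i, typeOf N1 i'),
                k (typeOf N1 i) (typeOf N1 i') ‖X i' - X i‖⟫ := by
      have e1 : ∀ pq : Fin 2 × Fin 2,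
          (⟪φ pq, adjInt N1 k (fun X => (g X : Conf d (N1 + N2))) pq X⟫ : ℝ)
          = ((((N1 + N2 : ℕ) : ℝ)) ^ 2)⁻¹ * ∑ i : Fin (N1 + N2), ∑ i' : Fin (N1 + N2),
              (if typeOf N1 i = pq.1 ∧ typeOf N1 i' = pq.2 ∧ i' ≠ i then
                (⟪X i' - X i, (g X : Conf d (N1 + N2)) i⟫ : ℝ) *
                  ⟪φ pq, k pq.1 pq.2 ‖X i' - X i‖⟫ else 0) := by
        intro pq
        rw [adjInt]
        simp only [inner_sum, real_inner_smul_right,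
          apply_ite (fun y : H pq.1 pq.2 => (⟪φ pq, y⟫ : ℝ)), inner_zero_right]
      simp only [e1]
      rw [← Finset.mul_sum]
      congr 1
      rw [Finset.sum_comm]
      refine Finset.sum_congr rfl fun i _ => ?_
      rw [Finset.sum_comm]
      refine Finset.sum_congr rfl fun i' _ => ?_
      exact hswap i i'
    rw [hL, hR2]
    field_simp
  have hI : ∫ X, (⟪g X, (WithLp.toLp 2 (forceField N1 (rkhsFun k (fun p q => φ (p, q))) X) :
      EConf d (N1 + N2))⟫ : ℝ) ∂ρX
      = ((N1 + N2 : ℕ) : ℝ) * ∑ pq : Fin 2 × Fin 2,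
          ∫ X, (⟪φ pq, adjInt N1 k (fun X => (g X : Conf d (N1 + N2))) pq X⟫ : ℝ) ∂ρX := by
    rw [show (fun X => (⟪g X, (WithLp.toLp 2 (forceField N1 (rkhsFun k (fun p q => φ (p, q))) X) :
        EConf d (N1 + N2))⟫ : ℝ))
        = fun X => ((N1 + N2 : ℕ) : ℝ) * ∑ pq : Fin 2 × Fin 2,
            (⟪φ pq, adjInt N1 k (fun X => (g X : Conf d (N1 + N2))) pq X⟫ : ℝ)
      from funext hpt]
    rw [integral_const_mul, integral_finset_sum _ fun pq _ => (hSint pq).const_inner (φ pq)]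
  rw [hI, PiLp.inner_apply]
  have hvpq : ∀ pq : Fin 2 × Fin 2,
      (⟪∫ X, ((((N1 + N2 : ℕ) : ℝ) ^ 2)⁻¹ •
            ∑ i : Fin (N1 + N2), ∑ i' : Fin (N1 + N2),
              (if typeOf N1 i = pq.1 ∧ typeOf N1 i' = pq.2 ∧ i' ≠ i then
                (⟪X i' - X i, (g X : Conf d (N1 + N2)) i⟫ : ℝ) •
                  k pq.1 pq.2 (‖X i' - X i‖)
              else 0)) ∂ρX, φ pq⟫ : ℝ)
      = ∫ X, (⟪φ pq, adjInt N1 k (fun X => (g X : Conf d (N1 + N2))) pq X⟫ : ℝ) ∂ρX := by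
    intro pq
    rw [real_inner_comm]
    exact (integral_inner (hSint pq) (φ pq)).symm
  simp only [hvpq]
  rw [inv_mul_cancel_left₀ hNne]

end
end

section
/- The operator B := A*A on ∏_{p,q} H_{K^{pq}} is a positive trace-class operator, and its trace satisfies Tr(B) ≤ 2 κ_max² R², where κ_max := max_{p,q} κ_{pq}. -/
open MeasureTheory
open scoped BigOperators ENNReal RealInnerProductSpace

set_option maxHeartbeats 1000000
set_option synthInstance.maxHeartbeats 400000

noncomputable section

/-- `κ_max = max_{p,q} κ_{pq}` -/
def maxOver (f : Fin 2 → Fin 2 → ℝ) : ℝ := max (max (f 0 0) (f 0 1)) (max (f 1 0) (f 1 1))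

lemma inner_single_left' {H : Fin 2 → Fin 2 → Type} [∀ p q, NormedAddCommGroup (H p q)]
    [∀ p q, InnerProductSpace ℝ (H p q)]
    (pq : Fin 2 × Fin 2) (h : H pq.1 pq.2)
    (φ : PiLp 2 fun pq : Fin 2 × Fin 2 => H pq.1 pq.2) :
    (⟪(WithLp.equiv 2 (∀ pq : Fin 2 × Fin 2, H pq.1 pq.2)).symm (Pi.single pq h), φ⟫ : ℝ)
      = ⟪h, φ pq⟫ := by
  classical
  rw [PiLp.inner_apply, Finset.sum_eq_single pq]
  · simp [WithLp.equiv_symm_apply]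
  · intro b _ hb
    simp [WithLp.equiv_symm_apply, Pi.single_eq_of_ne hb]
  · simp

lemma pointwise_bound
    {d N1 N : ℕ} (hN : 0 < N) {R : ℝ} (hR0 : 0 ≤ R)
    {H : Fin 2 → Fin 2 → Type} [∀ p q, NormedAddCommGroup (H p q)]
    [∀ p q, InnerProductSpace ℝ (H p q)]
    (k : ∀ p q, ℝ → H p q) (κm : ℝ)
    (hk : ∀ p q (r : ℝ), 0 ≤ r → r ≤ R → ‖k p q r‖ ≤ κm)
    {ι : Type} (e : ι → PiLp 2 fun pq : Fin 2 × Fin 2 => H pq.1 pq.2)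
    (he : Orthonormal ℝ e) (s : Finset ι)
    (X : Conf d N) (hX : ∀ i i' : Fin N, ‖X i' - X i‖ ≤ R) :
    ∑ n ∈ s, ∑ i : Fin N, ∑ j : Fin d,
        ((forceField N1 (rkhsFun k fun p q => e n (p, q)) X i : EuclideanSpace ℝ (Fin d)) j) ^ 2
      ≤ (N : ℝ) * κm ^ 2 * R ^ 2 := by
  classical
  have hκm0 : 0 ≤ κm := le_trans (norm_nonneg (k 0 0 0)) (hk 0 0 0 le_rfl hR0)
  have hNR : (0 : ℝ) < (N : ℝ) := by exact_mod_cast hN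
  set v : Fin N → Fin d → PiLp 2 (fun pq : Fin 2 × Fin 2 => H pq.1 pq.2) :=
    fun i j => (N : ℝ)⁻¹ • ∑ i' : Fin N, ((X i' - X i) j) •
      (WithLp.equiv 2 (∀ pq : Fin 2 × Fin 2, H pq.1 pq.2)).symm
        (Pi.single (typeOf N1 i, typeOf N1 i')
          (k (typeOf N1 i) (typeOf N1 i') ‖X i' - X i‖)) with hv
  -- coordinates of the force field as inner products against `v`
  have hcoord : ∀ (φ : PiLp 2 fun pq : Fin 2 × Fin 2 => H pq.1 pq.2) (i : Fin N) (j : Fin d),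
      ((forceField N1 (rkhsFun k fun p q => φ (p, q)) X i : EuclideanSpace ℝ (Fin d)) j)
        = ⟪v i j, φ⟫ := by
    intro φ i j
    have hL : (forceField N1 (rkhsFun k fun p q => φ (p, q)) X i : EuclideanSpace ℝ (Fin d)) j
        = (N : ℝ)⁻¹ * ∑ i' : Fin N,
            rkhsFun k (fun p q => φ (p, q)) (typeOf N1 i) (typeOf N1 i') (‖X i' - X i‖)
              * ((X i' - X i) j) := by
      have h1 : (forceField N1 (rkhsFun k fun p q => φ (p, q)) X i : EuclideanSpace ℝ (Fin d)) j
          = (EuclideanSpace.proj (𝕜 := ℝ) j)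
              (forceField N1 (rkhsFun k fun p q => φ (p, q)) X i) := rfl
      rw [h1, forceField]
      simp only [_root_.map_smul, map_sum, ContinuousLinearMap.map_smul, PiLp.proj_apply,
        smul_eq_mul]
    rw [hL, hv, real_inner_smul_left, sum_inner]
    congr 1
    refine Finset.sum_congr rfl fun i' _ => ?_
    rw [real_inner_smul_left, inner_single_left', real_inner_comm]
    simp only [rkhsFun]
    ring
  -- norm bound on v
  have hvnorm : ∀ i j, ‖v i j‖ ≤ (N : ℝ)⁻¹ * (κm * ∑ i' : Fin N, |(X i' - X i) j|) := by
    intro i j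
    rw [hv, norm_smul, Real.norm_eq_abs, abs_inv, abs_of_nonneg (le_of_lt hNR)]
    refine mul_le_mul_of_nonneg_left ?_ (by positivity)
    refine le_trans (norm_sum_le _ _) ?_
    rw [Finset.mul_sum]
    refine Finset.sum_le_sum fun i' _ => ?_
    rw [norm_smul, Real.norm_eq_abs, WithLp.equiv_symm_apply, PiLp.norm_toLp_single, mul_comm κm]
    exact mul_le_mul_of_nonneg_left (hk _ _ _ (norm_nonneg _) (hX i i')) (abs_nonneg _)
  -- per-agent bound
  have hvsq : ∀ i : Fin N, ∑ j : Fin d, ‖v i j‖ ^ 2 ≤ κm ^ 2 * R ^ 2 := by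
    intro i
    have hcs : ∀ j : Fin d, (∑ i' : Fin N, |(X i' - X i) j|) ^ 2
        ≤ (N : ℝ) * ∑ i' : Fin N, ((X i' - X i) j) ^ 2 := by
      intro j
      have := sq_sum_le_card_mul_sum_sq (s := (Finset.univ : Finset (Fin N)))
        (f := fun i' : Fin N => |(X i' - X i) j|)
      simpa [sq_abs, Finset.card_univ] using this
    have hnorm2 : ∀ i' : Fin N, ∑ j : Fin d, ((X i' - X i) j) ^ 2 = ‖X i' - X i‖ ^ 2 := by
      intro i'
      rw [PiLp.norm_sq_eq_of_L2]
      exact Finset.sum_congr rfl fun j _ => by rw [Real.norm_eq_abs, sq_abs]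
    calc ∑ j : Fin d, ‖v i j‖ ^ 2
        ≤ ∑ j : Fin d, ((N : ℝ)⁻¹ * (κm * ∑ i' : Fin N, |(X i' - X i) j|)) ^ 2 :=
          Finset.sum_le_sum fun j _ => pow_le_pow_left₀ (norm_nonneg _) (hvnorm i j) 2
      _ = (N : ℝ)⁻¹ ^ 2 * κm ^ 2 * ∑ j : Fin d, (∑ i' : Fin N, |(X i' - X i) j|) ^ 2 := by
          rw [Finset.mul_sum]; exact Finset.sum_congr rfl fun j _ => by ring
      _ ≤ (N : ℝ)⁻¹ ^ 2 * κm ^ 2 * ∑ j : Fin d, ((N : ℝ) * ∑ i' : Fin N, ((X i' - X i) j) ^ 2) := by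
          refine mul_le_mul_of_nonneg_left (Finset.sum_le_sum fun j _ => hcs j) (by positivity)
      _ = (N : ℝ)⁻¹ ^ 2 * κm ^ 2 * (N : ℝ) * ∑ i' : Fin N, ‖X i' - X i‖ ^ 2 := by
          rw [← Finset.mul_sum, Finset.sum_comm]
          simp_rw [hnorm2]
          ring
      _ ≤ (N : ℝ)⁻¹ ^ 2 * κm ^ 2 * (N : ℝ) * ∑ i' : Fin N, R ^ 2 := by
          refine mul_le_mul_of_nonneg_left (Finset.sum_le_sum fun i' _ => ?_) (by positivity)
          exact pow_le_pow_left₀ (norm_nonneg _) (hX i i') 2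
      _ = κm ^ 2 * R ^ 2 := by
          rw [Finset.sum_const, Finset.card_univ, Fintype.card_fin]
          field_simp
          ring
  -- assemble
  calc ∑ n ∈ s, ∑ i : Fin N, ∑ j : Fin d,
        ((forceField N1 (rkhsFun k fun p q => e n (p, q)) X i : EuclideanSpace ℝ (Fin d)) j) ^ 2
      = ∑ n ∈ s, ∑ i : Fin N, ∑ j : Fin d, (⟪v i j, e n⟫ : ℝ) ^ 2 := by
        refine Finset.sum_congr rfl fun n _ => Finset.sum_congr rfl fun i _ =>
          Finset.sum_congr rfl fun j _ => ?_
        rw [hcoord (e n) i j]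
    _ = ∑ i : Fin N, ∑ j : Fin d, ∑ n ∈ s, (⟪v i j, e n⟫ : ℝ) ^ 2 := by
        rw [Finset.sum_comm]
        exact Finset.sum_congr rfl fun i _ => Finset.sum_comm
    _ ≤ ∑ i : Fin N, ∑ j : Fin d, ‖v i j‖ ^ 2 := by
        refine Finset.sum_le_sum fun i _ => Finset.sum_le_sum fun j _ => ?_
        have := he.sum_inner_products_le (s := s) (v i j)
        simpa [Real.norm_eq_abs, sq_abs, real_inner_comm] using this
    _ ≤ ∑ i : Fin N, κm ^ 2 * R ^ 2 := Finset.sum_le_sum fun i _ => hvsq i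
    _ = (N : ℝ) * κm ^ 2 * R ^ 2 := by
        rw [Finset.sum_const, Finset.card_univ, Fintype.card_fin]
        ring

/-- The operator `B := A*A` on `∏_{p,q} H_{K^{pq}}` is a positive trace-class operator and
`Tr(B) ≤ 2 κ_max² R²` where `κ_max = max_{p,q} κ_{pq}`.  Trace-class with trace bound is
rendered as: for every Hilbert basis `(e_n)` of the product space, the family
`⟪B e_n, e_n⟫` is summable with `∑ₙ ⟪B e_n, e_n⟫ ≤ 2 κ_max² R²`. -/
theorem forceOperator_traceClass
    (d N1 N2 : ℕ) (hd : 0 < d) (hN1 : 0 < N1) (hN2 : 0 < N2)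
    (R : ℝ) (hR : 0 < R)
    (ρX : Measure (Conf d (N1 + N2))) [IsProbabilityMeasure ρX]
    (hsupp : ∀ᵐ X ∂ρX, ∀ i i' : Fin (N1 + N2), ‖X i' - X i‖ ≤ R)
    (hdisp : ∀ i i' : Fin (N1 + N2),
      MemLp (fun X : Conf d (N1 + N2) => X i' - X i) 2 ρX)
    (H : Fin 2 → Fin 2 → Type) [∀ p q, NormedAddCommGroup (H p q)]
    [∀ p q, InnerProductSpace ℝ (H p q)] [∀ p q, CompleteSpace (H p q)]
    (k : ∀ p q, ℝ → H p q)
    (hK_cont : ∀ p q, ContinuousOn (fun rr : ℝ × ℝ => (⟪k p q rr.1, k p q rr.2⟫ : ℝ))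
      (Set.Icc 0 R ×ˢ Set.Icc 0 R))
    (κ : Fin 2 → Fin 2 → ℝ) (hκ0 : ∀ p q, 0 ≤ κ p q)
    (hκ : ∀ p q, IsLUB ((fun r => (⟪k p q r, k p q r⟫ : ℝ)) '' Set.Icc 0 R) ((κ p q) ^ 2))
    (A : (PiLp 2 fun pq : Fin 2 × Fin 2 => H pq.1 pq.2) →L[ℝ]
        (Lp (EConf d (N1 + N2)) 2 (((N1 + N2 : ℕ) : ℝ≥0∞)⁻¹ • ρX)))
    (hA : ∀ φ : PiLp 2 fun pq : Fin 2 × Fin 2 => H pq.1 pq.2,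
      ∀ᵐ X ∂(((N1 + N2 : ℕ) : ℝ≥0∞)⁻¹ • ρX),
        (A φ) X = (WithLp.toLp 2 (forceField N1 (rkhsFun k (fun p q => φ (p, q))) X) : EConf d (N1 + N2))) :
    (((ContinuousLinearMap.adjoint A).comp A).IsPositive)
    ∧ ∀ (ι : Type) (e : HilbertBasis ι ℝ (PiLp 2 fun pq : Fin 2 × Fin 2 => H pq.1 pq.2)),
        Summable (fun n : ι =>
          (⟪((ContinuousLinearMap.adjoint A).comp A) (e n), e n⟫ : ℝ))
        ∧ ∑' n : ι, (⟪((ContinuousLinearMap.adjoint A).comp A) (e n), e n⟫ : ℝ)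
            ≤ 2 * (maxOver κ) ^ 2 * R ^ 2 := by
  classical
  have hNpos : 0 < N1 + N2 := Nat.add_pos_left hN1 N2
  have hNR : (0 : ℝ) < ((N1 + N2 : ℕ) : ℝ) := by exact_mod_cast hNpos
  set κm : ℝ := maxOver κ with hκm
  have hκle : ∀ p q, κ p q ≤ κm := by
    intro p q
    fin_cases p <;> fin_cases q <;> simp [hκm, maxOver, le_max_iff, le_refl]
  have hκm0 : 0 ≤ κm := le_trans (hκ0 0 0) (hκle 0 0)
  have hknorm : ∀ p q (r : ℝ), 0 ≤ r → r ≤ R → ‖k p q r‖ ≤ κm := by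
    intro p q r h0 hr
    have h1 : (⟪k p q r, k p q r⟫ : ℝ) ≤ (κ p q) ^ 2 :=
      (hκ p q).1 ⟨r, ⟨h0, hr⟩, rfl⟩
    rw [real_inner_self_eq_norm_sq] at h1
    nlinarith [norm_nonneg (k p q r), hκ0 p q, hκle p q]
  -- positivity
  have hpos : (((ContinuousLinearMap.adjoint A).comp A)).IsPositive := by
    have h := (ContinuousLinearMap.isPositive_one
      (E := Lp (EConf d (N1 + N2)) 2 (((N1 + N2 : ℕ) : ℝ≥0∞)⁻¹ • ρX))).adjoint_conj A
    rwa [ContinuousLinearMap.one_def, ContinuousLinearMap.id_comp] at h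
  -- the diagonal entries of B
  have hterm : ∀ φ : PiLp 2 fun pq : Fin 2 × Fin 2 => H pq.1 pq.2,
      (⟪((ContinuousLinearMap.adjoint A).comp A) φ, φ⟫ : ℝ) = ‖A φ‖ ^ 2 := by
    intro φ
    rw [ContinuousLinearMap.comp_apply, ContinuousLinearMap.adjoint_inner_left,
      real_inner_self_eq_norm_sq]
  -- partial-sum bound
  have hsum_bound : ∀ (ι : Type)
      (e : HilbertBasis ι ℝ (PiLp 2 fun pq : Fin 2 × Fin 2 => H pq.1 pq.2)) (s : Finset ι),
      ∑ n ∈ s, ‖A (e n)‖ ^ 2 ≤ κm ^ 2 * R ^ 2 := by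
    intro ι e s
    have h1 : ∀ n : ι, ‖A (e n)‖ ^ 2 = ∫ X, (⟪(A (e n)) X, (A (e n)) X⟫ : ℝ) ∂(((N1 + N2 : ℕ) : ℝ≥0∞)⁻¹ • ρX) := by
      intro n
      rw [← real_inner_self_eq_norm_sq]
      exact MeasureTheory.L2.inner_def (A (e n)) (A (e n))
    have hint : ∀ n : ι, Integrable (fun X => (⟪(A (e n)) X, (A (e n)) X⟫ : ℝ)) (((N1 + N2 : ℕ) : ℝ≥0∞)⁻¹ • ρX) :=
      fun n => MeasureTheory.L2.integrable_inner (𝕜 := ℝ) (A (e n)) (A (e n))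
    rw [Finset.sum_congr rfl fun n _ => h1 n, ← integral_finset_sum s fun n _ => hint n]
    have hs1 : ∀ᵐ X ∂(((N1 + N2 : ℕ) : ℝ≥0∞)⁻¹ • ρX), ∀ i i' : Fin (N1 + N2), ‖X i' - X i‖ ≤ R :=
      Measure.ae_smul_measure hsupp _
    have hs2 : ∀ᵐ X ∂(((N1 + N2 : ℕ) : ℝ≥0∞)⁻¹ • ρX), ∀ n ∈ (↑s : Set ι),
        (A (e n)) X = (WithLp.toLp 2 (forceField N1 (rkhsFun k (fun p q => (e n) (p, q))) X)
            : EConf d (N1 + N2)) := by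
      rw [MeasureTheory.ae_ball_iff s.countable_toSet]
      exact fun n _ => hA (e n)
    have hae : ∀ᵐ X ∂(((N1 + N2 : ℕ) : ℝ≥0∞)⁻¹ • ρX), ∑ n ∈ s, (⟪(A (e n)) X, (A (e n)) X⟫ : ℝ)
        ≤ ((N1 + N2 : ℕ) : ℝ) * κm ^ 2 * R ^ 2 := by
      filter_upwards [hs1, hs2] with X hX hAX
      have hFsum : ∑ n ∈ s, (⟪(A (e n)) X, (A (e n)) X⟫ : ℝ)
          = ∑ n ∈ s, ∑ i : Fin (N1 + N2), ∑ j : Fin d,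
              ((forceField N1 (rkhsFun k fun p q => (e n) (p, q)) X i
                : EuclideanSpace ℝ (Fin d)) j) ^ 2 := by
        refine Finset.sum_congr rfl fun n hn => ?_
        rw [hAX n (Finset.mem_coe.mpr hn), real_inner_self_eq_norm_sq, PiLp.norm_sq_eq_of_L2]
        refine Finset.sum_congr rfl fun i _ => ?_
        rw [PiLp.norm_sq_eq_of_L2]
        exact Finset.sum_congr rfl fun j _ => by rw [Real.norm_eq_abs, sq_abs]
      rw [hFsum]
      exact pointwise_bound hNpos hR.le k κm hknorm (fun n => e n) e.orthonormal s X hX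
    have hconst : Integrable (fun _ : Conf d (N1 + N2) =>
        ((N1 + N2 : ℕ) : ℝ) * κm ^ 2 * R ^ 2) (((N1 + N2 : ℕ) : ℝ≥0∞)⁻¹ • ρX) := by
      have : IsFiniteMeasure (((N1 + N2 : ℕ) : ℝ≥0∞)⁻¹ • ρX) := by
        constructor
        rw [Measure.smul_apply, smul_eq_mul, measure_univ, mul_one]
        exact ENNReal.inv_lt_top.2 (by exact_mod_cast hNpos)
      exact integrable_const _
    calc ∫ X, ∑ n ∈ s, (⟪(A (e n)) X, (A (e n)) X⟫ : ℝ) ∂(((N1 + N2 : ℕ) : ℝ≥0∞)⁻¹ • ρX)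
        ≤ ∫ _X, ((N1 + N2 : ℕ) : ℝ) * κm ^ 2 * R ^ 2 ∂(((N1 + N2 : ℕ) : ℝ≥0∞)⁻¹ • ρX) :=
          integral_mono_ae (integrable_finset_sum s fun n _ => hint n) hconst hae
      _ = (((((N1 + N2 : ℕ) : ℝ≥0∞)⁻¹ • ρX)) Set.univ).toReal
            * (((N1 + N2 : ℕ) : ℝ) * κm ^ 2 * R ^ 2) := by
          rw [integral_const, smul_eq_mul, measureReal_def]
      _ = κm ^ 2 * R ^ 2 := by
          rw [Measure.smul_apply, smul_eq_mul, measure_univ, mul_one,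
            ENNReal.toReal_inv, ENNReal.toReal_natCast]
          field_simp
  refine ⟨hpos, fun ι e => ?_⟩
  have hnn : ∀ n : ι, 0 ≤ (⟪((ContinuousLinearMap.adjoint A).comp A) (e n), e n⟫ : ℝ) := by
    intro n; rw [hterm]; positivity
  have hb : ∀ s : Finset ι,
      ∑ n ∈ s, (⟪((ContinuousLinearMap.adjoint A).comp A) (e n), e n⟫ : ℝ) ≤ κm ^ 2 * R ^ 2 := by
    intro s
    rw [Finset.sum_congr rfl fun n _ => hterm (e n)]
    exact hsum_bound ι e s
  have hsummable : Summable (fun n : ι =>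
      (⟪((ContinuousLinearMap.adjoint A).comp A) (e n), e n⟫ : ℝ)) :=
    summable_of_sum_le hnn hb
  refine ⟨hsummable, le_trans (Summable.tsum_le_of_sum_le hsummable hb) ?_⟩
  have : 0 ≤ κm ^ 2 * R ^ 2 := by positivity
  linarith


end
end
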